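/- arXiv:2403.15628 — 5 statements merged into one kernel-verified Lean document; each statement's English description precedes it below -/
import Mathlib

section
/- Let (E,T,S,e) be a conditional expectation preserving system with T strictly positive. Then Sg = g for every g in the range R(T) of T. -/
noncomputable section

open Function Set

variable {E : Type*}

/-- `e` is a weak order unit: `e > 0` and `e ⊓ |x| = 0` implies `x = 0`. -/
def WeakOrderUnit [Lattice E] [AddCommGroup E] (e : E) : Prop :=
  0 < e ∧ ∀ x : E, e ⊓ (x ⊔ -x) = 0 → x = 0

/-- `p` is a component of `q ∈ E₊`: `0 ≤ p ≤ q` and `(q - p) ⊓ p = 0`. -/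
def IsComponent [Lattice E] [AddCommGroup E] (q p : E) : Prop :=
  0 ≤ p ∧ p ≤ q ∧ (q - p) ⊓ p = 0

/-- `partialSup f n = ⋁_{j < n} f j`, with the empty supremum equal to `0`. -/
def partialSup [Lattice E] [Zero E] (f : ℕ → E) : ℕ → E
  | 0 => 0
  | n + 1 => partialSup f n ⊔ f n

/-- The band projection of `e` onto the band generated by `g`: `P_g e = ⨆_{m ∈ ℕ} (e ⊓ m•g)`. -/
def bandProjApp [ConditionallyCompleteLattice E] [AddCommGroup E] (g e : E) : E :=
  ⨆ m : ℕ, e ⊓ m • g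

/-- `qComp Sinv e p k = p ⊓ S⁻ᵏp ⊓ (e - ⋁_{j=1}^{k-1} S⁻ʲp)` (empty supremum is `0`). -/
def qComp [Lattice E] [AddCommGroup E] (Sinv : E → E) (e p : E) (k : ℕ) : E :=
  p ⊓ Sinv^[k] p ⊓ (e - partialSup (fun j => Sinv^[j + 1] p) (k - 1))

/-- `(E,T,S,e)` is a conditional expectation preserving system: `E` is a Dedekind complete
Riesz space (typeclass assumptions), `e` is a weak order unit, `T` is a strictly positive
conditional expectation operator with `Te = e`, and `S` is an order-continuous Riesz
homomorphism with `Se = e` and `TS = T`. -/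
structure IsCEPS [ConditionallyCompleteLattice E] [AddCommGroup E] [Module ℝ E]
    (T S : E →ₗ[ℝ] E) (e : E) : Prop where
  unit : WeakOrderUnit e
  T_pos : ∀ f : E, 0 ≤ f → 0 ≤ T f
  T_strictPos : ∀ f : E, 0 ≤ f → T f = 0 → f = 0
  T_proj : ∀ f : E, T (T f) = T f
  T_ordCont : ∀ D : Set E, D.Nonempty → DirectedOn (· ≥ ·) D → IsGLB D 0 →
    IsGLB ((⇑T) '' D) 0
  T_range_sublattice : ∀ x ∈ Set.range T, ∀ y ∈ Set.range T, x ⊔ y ∈ Set.range T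
  T_range_dedekind : ∀ D : Set E, D ⊆ Set.range T → D.Nonempty →
    (∃ b ∈ Set.range T, ∀ x ∈ D, x ≤ b) →
    ∃ s ∈ Set.range T, (∀ x ∈ D, x ≤ s) ∧ ∀ b ∈ Set.range T, (∀ x ∈ D, x ≤ b) → s ≤ b
  T_weakUnit : ∀ u : E, WeakOrderUnit u → WeakOrderUnit (T u)
  Te : T e = e
  S_hom : ∀ x y : E, S (x ⊔ y) = S x ⊔ S y
  S_ordCont : ∀ D : Set E, D.Nonempty → DirectedOn (· ≥ ·) D → IsGLB D 0 →
    IsGLB ((⇑S) '' D) 0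
  Se : S e = e
  TS : ∀ f : E, T (S f) = T f

/-- `E` is `T`-universally complete: every upward directed subset `D` of `E₊` for which
`T '' D` is order bounded in `E` has a supremum in `E`. -/
def TUnivComplete [ConditionallyCompleteLattice E] [AddCommGroup E] [Module ℝ E]
    (T : E →ₗ[ℝ] E) : Prop :=
  ∀ D : Set E, D.Nonempty → D ⊆ {x : E | 0 ≤ x} → DirectedOn (· ≤ ·) D →
    BddAbove ((⇑T) '' D) → BddBelow ((⇑T) '' D) → ∃ s : E, IsLUB D s

/-- `(S, v)` is aperiodic (with `Sinv` the inverse of `S`): for every `N ∈ ℕ` and every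
nonzero component `c` of `v` there exist `k ≥ N` and a component `u` of `c` with
`q(u,k) ≠ 0`. -/
def IsAperiodic [Lattice E] [AddCommGroup E] (Sinv : E → E) (e v : E) : Prop :=
  ∀ N : ℕ, ∀ c : E, IsComponent v c → c ≠ 0 →
    ∃ k : ℕ, N ≤ k ∧ ∃ u : E, IsComponent c u ∧ qComp Sinv e u k ≠ 0

/-- `(S, e)` is periodic (with `Sinv` the inverse of `S`): there is `N ∈ ℕ` such that
`q(c,k) = 0` for all `k ≥ N` and all components `c` of `e` with `0 ≠ c ≠ e`. -/
def IsPeriodic [Lattice E] [AddCommGroup E] (Sinv : E → E) (e : E) : Prop :=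
  ∃ N : ℕ, ∀ c : E, IsComponent e c → c ≠ 0 → c ≠ e → ∀ k : ℕ, N ≤ k → qComp Sinv e c k = 0


section Aux
variable {E : Type*} [ConditionallyCompleteLattice E] [AddCommGroup E]
  [CovariantClass E E (· + ·) (· ≤ ·)]

/-- Archimedean property of a Dedekind complete lattice group. -/
lemma aux_arch {x y : E} (h : ∀ n : ℕ, n • x ≤ y) : x ≤ 0 := by
  have hne : (Set.range fun n : ℕ => n • x).Nonempty := ⟨(0:ℕ) • x, 0, rfl⟩
  have hbdd : BddAbove (Set.range fun n : ℕ => n • x) :=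
    ⟨y, by rintro _ ⟨n, rfl⟩; exact h n⟩
  have hlub := isLUB_csSup hne hbdd
  set s := sSup (Set.range fun n : ℕ => n • x) with hs
  have h1 : s ≤ s - x := by
    apply hlub.2
    rintro _ ⟨n, rfl⟩
    rw [le_sub_iff_add_le, ← succ_nsmul]
    exact hlub.1 ⟨n + 1, rfl⟩
  exact (add_le_iff_nonpos_right _).mp (le_sub_iff_add_le.mp h1)

lemma aux_inf_add {u v w : E} (hu : 0 ≤ u) (hv : 0 ≤ v) (hw : 0 ≤ w) :
    u ⊓ (v + w) ≤ u ⊓ v + u ⊓ w := by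
  have h1 : u ⊓ (v + w) ≤ u ⊓ v + w := by
    calc u ⊓ (v + w) ≤ (u + w) ⊓ (v + w) :=
          inf_le_inf_right _ (le_add_of_nonneg_right hw)
    _ = u ⊓ v + w := by rw [add_comm u w, add_comm v w, ← add_inf, add_comm]
  have h2 : u ⊓ (v + w) ≤ u ⊓ v + u :=
    le_trans inf_le_left (le_add_of_nonneg_left (le_inf hu hv))
  calc u ⊓ (v + w) ≤ (u ⊓ v + w) ⊓ (u ⊓ v + u) := le_inf h1 h2
  _ = u ⊓ v + w ⊓ u := (add_inf w u (u ⊓ v)).symm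
  _ = u ⊓ v + u ⊓ w := by rw [inf_comm w u]

lemma aux_disj_nsmul {p a : E} (hp : 0 ≤ p) (ha : 0 ≤ a) (h : p ⊓ a = 0) (m : ℕ) :
    (m • p) ⊓ a = 0 := by
  induction m with
  | zero => rw [zero_nsmul]; exact inf_eq_left.mpr ha
  | succ m ih =>
    have h0 : 0 ≤ (m + 1) • p ⊓ a := le_inf (nsmul_nonneg hp _) ha
    have hle : (m + 1) • p ⊓ a ≤ 0 := by
      rw [succ_nsmul]
      calc (m • p + p) ⊓ a = a ⊓ (m • p + p) := inf_comm _ _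
      _ ≤ a ⊓ (m • p) + a ⊓ p := aux_inf_add ha (nsmul_nonneg hp m) hp
      _ = (m • p) ⊓ a + p ⊓ a := by rw [inf_comm a, inf_comm a]
      _ = 0 := by rw [ih, h, add_zero]
    exact le_antisymm hle h0

lemma aux_disj_lub {f : ℕ → E} {c a : E} (hlub : IsLUB (Set.range f) c)
    (hf : ∀ m, 0 ≤ f m) (ha : 0 ≤ a) (h : ∀ m, f m ⊓ a = 0) : c ⊓ a = 0 := by
  set d := c ⊓ a with hd
  have hd0 : 0 ≤ d := le_inf ((hf 0).trans (hlub.1 ⟨0, rfl⟩)) ha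
  have hfd : ∀ m, f m ⊓ d = 0 := by
    intro m
    refine le_antisymm ?_ (le_inf (hf m) hd0)
    calc f m ⊓ d ≤ f m ⊓ a := inf_le_inf_left _ inf_le_right
    _ = 0 := h m
  have hub : ∀ m, f m ≤ c - d := by
    intro m
    have h2 := inf_add_sup (f m) d
    rw [hfd m, zero_add] at h2
    rw [le_sub_iff_add_le, ← h2]
    exact sup_le (hlub.1 ⟨m, rfl⟩) inf_le_left
  have h3 : c ≤ c - d := hlub.2 (by rintro _ ⟨m, rfl⟩; exact hub m)
  exact le_antisymm ((add_le_iff_nonpos_right _).mp (le_sub_iff_add_le.mp h3)) hd0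

lemma aux_inf_eq (u v : E) : u ⊓ v = u - (u - v)⁺ := by
  rw [posPart_def, sub_sup, sub_sub_cancel, sub_zero, inf_comm]

lemma aux_posPart_posPart_sub {a e : E} (he : 0 ≤ e) : (a⁺ - e)⁺ = (a - e)⁺ := by
  apply le_antisymm
  · have h1 : a⁺ - e ≤ (a - e)⁺ := by
      rw [posPart_def, sup_sub]
      exact sup_le (le_posPart _) ((sub_nonpos.mpr he).trans (posPart_nonneg _))
    calc (a⁺ - e)⁺ ≤ ((a - e)⁺)⁺ := posPart_mono h1
    _ = (a - e)⁺ := posPart_of_nonneg (posPart_nonneg _)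
  · exact posPart_mono (sub_le_sub_right (le_posPart _) e)

lemma aux_tele {x e : E} (he : 0 ≤ e) (k : ℕ) :
    (x - k • e)⁺ ⊓ e = (x - k • e)⁺ - (x - (k + 1) • e)⁺ := by
  rw [aux_inf_eq, aux_posPart_posPart_sub he, sub_sub, ← succ_nsmul]

lemma aux_nsmul_le_sum {f : ℕ → E} {b : E} (n : ℕ) (h : ∀ k, k < n → b ≤ f k) :
    n • b ≤ ∑ k ∈ Finset.range n, f k := by
  induction n with
  | zero => simp
  | succ n ih =>
    rw [Finset.sum_range_succ, succ_nsmul]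
    exact add_le_add (ih fun k hk => h k (hk.trans (Nat.lt_succ_self n)))
      (h n (Nat.lt_succ_self n))

lemma aux_sum_le_sum {f g : ℕ → E} {s : Finset ℕ} (h : ∀ i ∈ s, f i ≤ g i) :
    ∑ i ∈ s, f i ≤ ∑ i ∈ s, g i := by
  classical
  induction s using Finset.induction_on with
  | empty => simp
  | insert _ _ hx ih =>
    rw [Finset.sum_insert hx, Finset.sum_insert hx]
    exact add_le_add (h _ (Finset.mem_insert_self _ _))
      (ih fun i hi => h i (Finset.mem_insert_of_mem hi))

end Aux

section Main
variable {E : Type*} [ConditionallyCompleteLattice E] [AddCommGroup E]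
  [Module ℝ E] [CovariantClass E E (· + ·) (· ≤ ·)] [PosSMulMono ℝ E]
  {T S : E →ₗ[ℝ] E} {e : E}

lemma ceps_fix (hC : IsCEPS T S e) {x : E} (hx : x ∈ Set.range T) : T x = x := by
  obtain ⟨y, rfl⟩ := hx; exact hC.T_proj y

lemma ceps_range_inf (hC : IsCEPS T S e) {x y : E} (hx : x ∈ Set.range T)
    (hy : y ∈ Set.range T) : x ⊓ y ∈ Set.range T := by
  obtain ⟨a, rfl⟩ := hx
  obtain ⟨b, rfl⟩ := hy
  obtain ⟨cc, hcc⟩ := hC.T_range_sublattice (-(T a)) ⟨-a, map_neg T a⟩ (-(T b)) ⟨-b, map_neg T b⟩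
  exact ⟨-cc, by rw [map_neg, hcc, neg_sup, neg_neg, neg_neg]⟩

lemma ceps_T_mono (hC : IsCEPS T S e) {x y : E} (h : x ≤ y) : T x ≤ T y := by
  have h2 := hC.T_pos _ (sub_nonneg.mpr h)
  rwa [map_sub, sub_nonneg] at h2

lemma ceps_S_pos (hC : IsCEPS T S e) {x : E} (h : 0 ≤ x) : 0 ≤ S x := by
  have h1 := hC.S_hom x 0
  rw [sup_eq_left.mpr h, map_zero] at h1
  rw [h1]; exact le_sup_right

lemma ceps_S_mono (hC : IsCEPS T S e) {x y : E} (h : x ≤ y) : S x ≤ S y := by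
  have h2 := ceps_S_pos hC (sub_nonneg.mpr h)
  rwa [map_sub, sub_nonneg] at h2

/-- A component of `e` that is fixed by `T` is fixed by `S`. -/
lemma ceps_comp_fixed (hC : IsCEPS T S e) {c : E} (hc0 : 0 ≤ c) (hce : c ≤ e)
    (hcomp : (e - c) ⊓ c = 0) (hTc : T c = c) : S c = c := by
  have hec0 : 0 ≤ e - c := sub_nonneg.mpr hce
  have hSc0 : 0 ≤ S c := ceps_S_pos hC hc0
  have hSce : S c ≤ e := by have := ceps_S_mono hC hce; rwa [hC.Se] at this
  have hTSc : T (S c) = c := by rw [hC.TS, hTc]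
  have hTec : T (e - c) = e - c := by rw [map_sub, hC.Te, hTc]
  have hd1 : S c ⊓ (e - c) = 0 := by
    have h0 : 0 ≤ S c ⊓ (e - c) := le_inf hSc0 hec0
    refine hC.T_strictPos _ h0 (le_antisymm ?_ (hC.T_pos _ h0))
    calc T (S c ⊓ (e - c)) ≤ T (S c) ⊓ T (e - c) :=
          le_inf (ceps_T_mono hC inf_le_left) (ceps_T_mono hC inf_le_right)
    _ = c ⊓ (e - c) := by rw [hTSc, hTec]
    _ = 0 := by rw [inf_comm]; exact hcomp
  have h1 : S c ≤ c := by
    calc S c = S c ⊓ e := (inf_eq_left.mpr hSce).symm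
    _ = S c ⊓ (c + (e - c)) := by congr 1; abel
    _ ≤ S c ⊓ c + S c ⊓ (e - c) := aux_inf_add hSc0 hc0 hec0
    _ = S c ⊓ c := by rw [hd1, add_zero]
    _ ≤ c := inf_le_right
  have hd2 : c ⊓ (e - S c) = 0 := by
    have h0 : 0 ≤ c ⊓ (e - S c) := le_inf hc0 (sub_nonneg.mpr hSce)
    refine hC.T_strictPos _ h0 (le_antisymm ?_ (hC.T_pos _ h0))
    calc T (c ⊓ (e - S c)) ≤ T c ⊓ T (e - S c) :=
          le_inf (ceps_T_mono hC inf_le_left) (ceps_T_mono hC inf_le_right)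
    _ = c ⊓ (e - c) := by rw [hTc, map_sub, hC.Te, hTSc]
    _ = 0 := by rw [inf_comm]; exact hcomp
  have h2 : c ≤ S c := by
    calc c = c ⊓ e := (inf_eq_left.mpr hce).symm
    _ = c ⊓ (S c + (e - S c)) := by congr 1; abel
    _ ≤ c ⊓ S c + c ⊓ (e - S c) := aux_inf_add hc0 hSc0 (sub_nonneg.mpr hSce)
    _ = c ⊓ S c := by rw [hd2, add_zero]
    _ ≤ S c := inf_le_right
  exact le_antisymm h1 h2
end Main

section Band
variable {E : Type*} [ConditionallyCompleteLattice E] [AddCommGroup E]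
  [Module ℝ E] [CovariantClass E E (· + ·) (· ≤ ·)] [PosSMulMono ℝ E]
  {T S : E →ₗ[ℝ] E} {e : E}

/-- Properties of the band projection of `e` onto the band generated by a positive
element `p` of the range of `T`. -/
lemma ceps_band (hC : IsCEPS T S e) {p : E} (hp0 : 0 ≤ p) (hpr : p ∈ Set.range T) :
    ∃ c : E, 0 ≤ c ∧ c ≤ e ∧ S c = c ∧ e ⊓ p ≤ c ∧
      ∀ b : E, 0 ≤ b → p ⊓ b = 0 → c ⊓ b = 0 := by
  have he : 0 ≤ e := hC.unit.1.le
  set f : ℕ → E := fun m => e ⊓ m • p with hf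
  have hf0 : ∀ m, 0 ≤ f m := fun m => le_inf he (nsmul_nonneg hp0 m)
  have hfe : ∀ m, f m ≤ e := fun m => inf_le_left
  have hne : (Set.range f).Nonempty := ⟨f 0, 0, rfl⟩
  have hbdd : BddAbove (Set.range f) := ⟨e, by rintro _ ⟨m, rfl⟩; exact hfe m⟩
  have hlub : IsLUB (Set.range f) (sSup (Set.range f)) := isLUB_csSup hne hbdd
  set c := sSup (Set.range f) with hcdef
  have hc0 : 0 ≤ c := (hf0 0).trans (hlub.1 ⟨0, rfl⟩)
  have hce : c ≤ e := hlub.2 (by rintro _ ⟨m, rfl⟩; exact hfe m)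
  have hfc : ∀ m, f m ≤ c := fun m => hlub.1 ⟨m, rfl⟩
  have hfr : ∀ m, f m ∈ Set.range T := by
    intro m
    obtain ⟨a, ha⟩ := hpr
    exact ceps_range_inf hC ⟨e, hC.Te⟩ ⟨m • a, by rw [map_nsmul, ha]⟩
  have hdisj : ∀ b : E, 0 ≤ b → p ⊓ b = 0 → c ⊓ b = 0 := by
    intro b hb hpb
    apply aux_disj_lub hlub hf0 hb
    intro m
    refine le_antisymm ?_ (le_inf (hf0 m) hb)
    calc f m ⊓ b ≤ (m • p) ⊓ b := inf_le_inf_right b inf_le_right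
    _ = 0 := aux_disj_nsmul hp0 hb hpb m
  have hr : (e - c) ⊓ p = 0 := by
    set r := (e - c) ⊓ p with hrdef
    have hr0 : 0 ≤ r := le_inf (sub_nonneg.mpr hce) hp0
    have hstep : ∀ m, f m + r ≤ f (m + 1) := by
      intro m
      apply le_inf
      · have h4 : r ≤ e - f m :=
          le_trans inf_le_left (sub_le_sub_left (hfc m) e)
        calc f m + r ≤ f m + (e - f m) := add_le_add le_rfl h4
        _ = e := by abel
      · rw [succ_nsmul]
        exact add_le_add inf_le_right inf_le_right
    have hub : ∀ m, f m ≤ c - r := fun m =>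
      le_sub_iff_add_le.mpr ((hstep m).trans (hfc (m + 1)))
    have h3 : c ≤ c - r := hlub.2 (by rintro _ ⟨m, rfl⟩; exact hub m)
    exact le_antisymm ((add_le_iff_nonpos_right _).mp (le_sub_iff_add_le.mp h3)) hr0
  have hcomp : (e - c) ⊓ c = 0 := by
    have h5 := hdisj (e - c) (sub_nonneg.mpr hce) (by rw [inf_comm]; exact hr)
    rw [inf_comm]; exact h5
  have hTc : T c = c := by
    have hTfm : ∀ m, T (f m) = f m := fun m => ceps_fix hC (hfr m)
    set D := Set.range (fun m : ℕ => c - f m) with hD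
    have hDne : D.Nonempty := ⟨c - f 0, 0, rfl⟩
    have hmono : Monotone f := fun m m' hmm =>
      inf_le_inf_left e (nsmul_le_nsmul_left hp0 hmm)
    have hdir : DirectedOn (· ≥ ·) D := by
      rintro _ ⟨m, rfl⟩ _ ⟨m', rfl⟩
      exact ⟨c - f (max m m'), ⟨max m m', rfl⟩,
        sub_le_sub_left (hmono (le_max_left m m')) c,
        sub_le_sub_left (hmono (le_max_right m m')) c⟩
    have hglb : IsGLB D 0 := by
      constructor
      · rintro _ ⟨m, rfl⟩; exact sub_nonneg.mpr (hfc m)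
      · intro b hb
        have h6 : ∀ m, f m ≤ c - b := by
          intro m
          have h7 := hb ⟨m, rfl⟩
          rw [le_sub_iff_add_le] at h7 ⊢
          rwa [add_comm]
        have h8 : c ≤ c - b := hlub.2 (by rintro _ ⟨m, rfl⟩; exact h6 m)
        exact (add_le_iff_nonpos_right _).mp (le_sub_iff_add_le.mp h8)
    have hTglb := hC.T_ordCont D hDne hdir hglb
    have himg : (⇑T) '' D = Set.range (fun m : ℕ => T c - f m) := by
      have hfun : (⇑T ∘ fun m : ℕ => c - f m) = fun m : ℕ => T c - f m := by
        funext m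
        show T (c - f m) = T c - f m
        rw [map_sub, hTfm m]
      rw [hD, ← Set.range_comp, hfun]
    rw [himg] at hTglb
    have hge : c ≤ T c :=
      hlub.2 (by rintro _ ⟨m, rfl⟩; exact sub_nonneg.mp (hTglb.1 ⟨m, rfl⟩))
    have hle : T c - c ≤ 0 :=
      hTglb.2 (by rintro _ ⟨m, rfl⟩; exact sub_le_sub_left (hfc m) (T c))
    exact le_antisymm (sub_nonpos.mp hle) hge
  refine ⟨c, hc0, hce, ceps_comp_fixed hC hc0 hce hcomp hTc, ?_, hdisj⟩
  have h9 := hfc 1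
  simpa [hf] using h9
end Band

section Key
variable {E : Type*} [ConditionallyCompleteLattice E] [AddCommGroup E]
  [Module ℝ E] [CovariantClass E E (· + ·) (· ≤ ·)] [PosSMulMono ℝ E]
  {T S : E →ₗ[ℝ] E} {e : E}

lemma ceps_key_ineq (hC : IsCEPS T S e) {g : E} (hg : g ∈ Set.range T) (h0 : 0 ≤ g)
    (h1 : g ≤ e) (n : ℕ) : n • (g - S g) ≤ e := by
  have he : 0 ≤ e := hC.unit.1.le
  have hTg : T g = g := ceps_fix hC hg
  set p : ℕ → E := fun k => (n • g - k • e)⁺ with hp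
  have hp0 : ∀ k, 0 ≤ p k := fun k => posPart_nonneg _
  have hpr : ∀ k, p k ∈ Set.range T := by
    intro k
    have hmem : n • g - k • e ∈ Set.range T :=
      ⟨n • g - k • e, by rw [map_sub, map_nsmul, map_nsmul, hTg, hC.Te]⟩
    have : p k = (n • g - k • e) ⊔ 0 := by simp only [hp]; rw [posPart_def]
    rw [this]
    exact hC.T_range_sublattice _ hmem _ ⟨0, map_zero T⟩
  have htele : ∀ k, p k ⊓ e = p k - p (k + 1) := by
    intro k
    simp only [hp]
    exact aux_tele he k
  choose c hc0 hce hSc hlow hdisj using fun k : ℕ => ceps_band hC (hp0 (k + 1)) (hpr (k + 1))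
  have hupper : ∀ k, c k ≤ p k ⊓ e := by
    intro k
    set a := n • g - (k + 1) • e with ha
    set b := e - p k ⊓ e with hb
    have hb0 : 0 ≤ b := sub_nonneg.mpr inf_le_right
    have hpk : p k = (a + e)⁺ := by
      simp only [hp, ha]
      congr 1
      rw [succ_nsmul]
      abel
    have hpk1 : p (k + 1) = a⁺ := by simp only [hp, ha]
    have hbneg : b ≤ a⁻ := by
      have hbe : b = (e - p k)⁺ := by rw [hb, sub_inf, sub_self, posPart_def]
      rw [hbe]
      have h2 : e - p k ≤ -a := by
        rw [hpk]
        calc e - (a + e)⁺ ≤ e - (a + e) := sub_le_sub_left (le_posPart (a + e)) e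
        _ = -a := by abel
      calc (e - p k)⁺ ≤ (-a)⁺ := posPart_mono h2
      _ = a⁻ := by rw [posPart_def, negPart_def]
    have hdb : p (k + 1) ⊓ b = 0 := by
      refine le_antisymm ?_ (le_inf (hp0 _) hb0)
      calc p (k + 1) ⊓ b ≤ a⁺ ⊓ a⁻ := inf_le_inf (le_of_eq hpk1) hbneg
      _ = 0 := posPart_inf_negPart_eq_zero a
    have hcb := hdisj k b hb0 hdb
    have hsum := inf_add_sup (c k) b
    rw [hcb, zero_add] at hsum
    have hce' : c k + b ≤ e := by
      rw [← hsum]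
      exact sup_le (hce k) (by rw [hb]; exact sub_le_self e (le_inf (hp0 k) he))
    have h3 : c k ≤ e - b := le_sub_iff_add_le.mpr hce'
    rwa [hb, sub_sub_cancel] at h3
  have hlower : ∀ k, p (k + 1) ⊓ e ≤ c k := fun k => by rw [inf_comm]; exact hlow k
  have hSC : S (∑ k ∈ Finset.range n, c k) = ∑ k ∈ Finset.range n, c k := by
    rw [map_sum]
    exact Finset.sum_congr rfl fun k _ => hSc k
  have hp00 : p 0 = n • g := by
    simp only [hp]
    rw [zero_nsmul, sub_zero, posPart_of_nonneg (nsmul_nonneg h0 n)]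
  have hpn : p n = 0 := by
    simp only [hp]
    exact posPart_of_nonpos (sub_nonpos.mpr (nsmul_le_nsmul_right h1 n))
  have hpn1 : p (n + 1) = 0 := by
    simp only [hp]
    apply posPart_of_nonpos
    calc n • g - (n + 1) • e ≤ n • e - (n + 1) • e :=
          sub_le_sub_right (nsmul_le_nsmul_right h1 n) _
    _ = -e := by rw [succ_nsmul]; abel
    _ ≤ 0 := neg_nonpos.mpr he
  have hCle : (∑ k ∈ Finset.range n, c k) ≤ n • g := by
    calc (∑ k ∈ Finset.range n, c k) ≤ ∑ k ∈ Finset.range n, (p k ⊓ e) :=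
          aux_sum_le_sum fun k _ => hupper k
    _ = ∑ k ∈ Finset.range n, (p k - p (k + 1)) :=
          Finset.sum_congr rfl fun k _ => htele k
    _ = p 0 - p n := Finset.sum_range_sub' p n
    _ = n • g := by rw [hp00, hpn, sub_zero]
  have hCge : n • g - e ≤ ∑ k ∈ Finset.range n, c k := by
    have hp1 : n • g - e ≤ p 1 := by
      simp only [hp]
      rw [one_nsmul]
      exact le_posPart _
    calc n • g - e ≤ p 1 := hp1
    _ = p 1 - p (n + 1) := by rw [hpn1, sub_zero]
    _ = ∑ k ∈ Finset.range n, (p (k + 1) - p (k + 2)) :=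
          (Finset.sum_range_sub' (fun k => p (k + 1)) n).symm
    _ = ∑ k ∈ Finset.range n, (p (k + 1) ⊓ e) :=
          Finset.sum_congr rfl fun k _ => (htele (k + 1)).symm
    _ ≤ ∑ k ∈ Finset.range n, c k := aux_sum_le_sum fun k _ => hlower k
  have hfin : n • g ≤ n • S g + e := by
    have h4 : n • g - e ≤ n • S g := by
      calc n • g - e ≤ ∑ k ∈ Finset.range n, c k := hCge
      _ = S (∑ k ∈ Finset.range n, c k) := hSC.symm
      _ ≤ S (n • g) := ceps_S_mono hC hCle
      _ = n • S g := map_nsmul S n g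
    rwa [sub_le_iff_le_add] at h4
  rw [nsmul_sub, sub_le_iff_le_add]
  rwa [add_comm] at hfin

lemma ceps_bounded_fixed (hC : IsCEPS T S e) {g : E} (hg : g ∈ Set.range T)
    (h0 : 0 ≤ g) (h1 : g ≤ e) : S g = g := by
  have hTg := ceps_fix hC hg
  have hg' : e - g ∈ Set.range T := ⟨e - g, by rw [map_sub, hC.Te, hTg]⟩
  have ha : ∀ n : ℕ, n • (g - S g) ≤ e := fun n => ceps_key_ineq hC hg h0 h1 n
  have hb : ∀ n : ℕ, n • (S g - g) ≤ e := by
    intro n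
    have h2 := ceps_key_ineq hC hg' (sub_nonneg.mpr h1) (sub_le_self e h0) n
    rw [map_sub, hC.Se] at h2
    have h3 : e - g - (e - S g) = S g - g := by abel
    rwa [h3] at h2
  exact le_antisymm (sub_nonpos.mp (aux_arch hb)) (sub_nonpos.mp (aux_arch ha))
end Key
section Final
variable {E : Type*} [ConditionallyCompleteLattice E] [AddCommGroup E]
  [Module ℝ E] [CovariantClass E E (· + ·) (· ≤ ·)] [PosSMulMono ℝ E]
  {T S : E →ₗ[ℝ] E} {e : E}

lemma ceps_glb_cut (hC : IsCEPS T S e) {g : E} (h0 : 0 ≤ g) :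
    IsGLB (Set.range fun m : ℕ => (g - m • e)⁺) 0 := by
  have he : 0 ≤ e := hC.unit.1.le
  constructor
  · rintro _ ⟨m, rfl⟩; exact posPart_nonneg _
  · intro w hw
    have hw' : ∀ m : ℕ, w⁺ ≤ (g - m • e)⁺ := by
      intro m
      calc w⁺ ≤ ((g - m • e)⁺)⁺ := posPart_mono (hw ⟨m, rfl⟩)
      _ = (g - m • e)⁺ := posPart_of_nonneg (posPart_nonneg _)
    have hkey : ∀ m : ℕ, m • (w⁺ ⊓ e) ≤ g := by
      intro m
      have hle : ∑ k ∈ Finset.range m, ((g - k • e)⁺ ⊓ e) ≤ g := by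
        calc ∑ k ∈ Finset.range m, ((g - k • e)⁺ ⊓ e)
            = ∑ k ∈ Finset.range m, ((g - k • e)⁺ - (g - (k + 1) • e)⁺) :=
              Finset.sum_congr rfl fun k _ => aux_tele he k
        _ = (g - 0 • e)⁺ - (g - m • e)⁺ := Finset.sum_range_sub' (fun k => (g - k • e)⁺) m
        _ = g - (g - m • e)⁺ := by rw [zero_nsmul, sub_zero, posPart_of_nonneg h0]
        _ ≤ g := sub_le_self g (posPart_nonneg _)
      refine le_trans (aux_nsmul_le_sum m ?_) hle
      exact fun k _ => inf_le_inf_right e (hw' k)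
    have harch : w⁺ ⊓ e ≤ 0 := aux_arch hkey
    have h0' : 0 ≤ w⁺ ⊓ e := le_inf (posPart_nonneg _) he
    have hz : e ⊓ (w⁺ ⊔ -w⁺) = 0 := by
      have h1 : w⁺ ⊔ -w⁺ = w⁺ :=
        sup_eq_left.mpr ((neg_nonpos.mpr (posPart_nonneg w)).trans (posPart_nonneg w))
      rw [h1, inf_comm]
      exact le_antisymm harch h0'
    have h2 := hC.unit.2 w⁺ hz
    calc w ≤ w⁺ := le_posPart w
    _ = 0 := h2

lemma ceps_pos_fixed (hC : IsCEPS T S e) {g : E} (hg : g ∈ Set.range T)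
    (h0 : 0 ≤ g) : S g = g := by
  have he : (0:E) ≤ e := hC.unit.1.le
  have hTg := ceps_fix hC hg
  have htr : ∀ m : ℕ, S (g ⊓ m • e) = g ⊓ m • e := by
    intro m
    rcases Nat.eq_zero_or_pos m with hm | hm
    · subst hm
      rw [zero_nsmul, inf_eq_right.mpr h0, map_zero]
    · have hmem : g ⊓ m • e ∈ Set.range T :=
        ceps_range_inf hC hg ⟨m • e, by rw [map_nsmul, hC.Te]⟩
      set u := ((m : ℝ)⁻¹) • (g ⊓ m • e) with hu
      have hmne : (m : ℝ) ≠ 0 := Nat.cast_ne_zero.mpr hm.ne'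
      have hminv : (0:ℝ) ≤ (m : ℝ)⁻¹ := inv_nonneg.mpr (Nat.cast_nonneg m)
      have hu0 : 0 ≤ u := by
        have h2 : ((m:ℝ)⁻¹) • (0:E) ≤ ((m:ℝ)⁻¹) • (g ⊓ m • e) :=
          smul_le_smul_of_nonneg_left (le_inf h0 (nsmul_nonneg he m)) hminv
        rwa [smul_zero] at h2
      have hue : u ≤ e := by
        have h2 : g ⊓ m • e ≤ (m : ℝ) • e := by
          rw [Nat.cast_smul_eq_nsmul]; exact inf_le_right
        have h3 := smul_le_smul_of_nonneg_left h2 hminv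
        rwa [smul_smul, inv_mul_cancel₀ hmne, one_smul] at h3
      have humem : u ∈ Set.range T := by
        obtain ⟨a, ha⟩ := hmem
        exact ⟨((m:ℝ)⁻¹) • a, by rw [map_smul, ha]⟩
      have hSu : S u = u := ceps_bounded_fixed hC humem hu0 hue
      have h4 : S ((m:ℝ) • u) = (m:ℝ) • u := by rw [map_smul, hSu]
      rwa [hu, smul_smul, mul_inv_cancel₀ hmne, one_smul] at h4
  have hkey : ∀ m : ℕ, g - g ⊓ m • e = (g - m • e)⁺ := by
    intro m
    rw [aux_inf_eq g (m • e), sub_sub_cancel]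
  set D := Set.range (fun m : ℕ => (g - m • e)⁺) with hD
  have hglb : IsGLB D 0 := ceps_glb_cut hC h0
  have hne : D.Nonempty := ⟨_, 0, rfl⟩
  have hanti : ∀ m m' : ℕ, m ≤ m' → (g - m' • e)⁺ ≤ (g - m • e)⁺ := fun m m' h =>
    posPart_mono (sub_le_sub_left (nsmul_le_nsmul_left he h) g)
  have hdir : DirectedOn (· ≥ ·) D := by
    rintro _ ⟨m, rfl⟩ _ ⟨m', rfl⟩
    exact ⟨_, ⟨max m m', rfl⟩, hanti m (max m m') (le_max_left _ _),
      hanti m' (max m m') (le_max_right _ _)⟩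
  have hSglb := hC.S_ordCont D hne hdir hglb
  have himg : (⇑S) '' D = Set.range (fun m : ℕ => S g - g ⊓ m • e) := by
    have hfun : (⇑S ∘ fun m : ℕ => (g - m • e)⁺) = fun m : ℕ => S g - g ⊓ m • e := by
      funext m
      show S ((g - m • e)⁺) = S g - g ⊓ m • e
      rw [← hkey m, map_sub, htr m]
    rw [hD, ← Set.range_comp, hfun]
  rw [himg] at hSglb
  have hub : ∀ m : ℕ, g ⊓ m • e ≤ S g := fun m => sub_nonneg.mp (hSglb.1 ⟨m, rfl⟩)
  have hle : S g - g ≤ 0 :=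
    hSglb.2 (by rintro _ ⟨m, rfl⟩; exact sub_le_sub_left inf_le_left (S g))
  have hge : g - S g ≤ 0 := by
    refine hglb.2 ?_
    rintro _ ⟨m, rfl⟩
    show g - S g ≤ (g - m • e)⁺
    rw [← hkey m]
    exact sub_le_sub_left (hub m) g
  exact le_antisymm (sub_nonpos.mp hle) (sub_nonpos.mp hge)

end Final

/-- If `(E,T,S,e)` is a conditional expectation preserving system with `T` strictly
positive, then `Sg = g` for every `g` in the range of `T`. -/
theorem fixed_on_range {E : Type*} [ConditionallyCompleteLattice E] [AddCommGroup E]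
    [Module ℝ E] [CovariantClass E E (· + ·) (· ≤ ·)] [PosSMulMono ℝ E]
    (T S : E →ₗ[ℝ] E) (e : E) (hCEPS : IsCEPS T S e) :
    ∀ g ∈ Set.range T, S g = g := by
  intro g hg
  have hgp : g⁺ ∈ Set.range T := by
    rw [posPart_def]
    exact hCEPS.T_range_sublattice _ hg _ ⟨0, map_zero T⟩
  have hd : g⁺ - g ∈ Set.range T :=
    ⟨g⁺ - g, by rw [map_sub, ceps_fix hCEPS hgp, ceps_fix hCEPS hg]⟩
  have h1 : S g⁺ = g⁺ := ceps_pos_fixed hCEPS hgp (posPart_nonneg g)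
  have h2 : S (g⁺ - g) = g⁺ - g :=
    ceps_pos_fixed hCEPS hd (sub_nonneg.mpr (le_posPart g))
  have h3 : S g = S g⁺ - S (g⁺ - g) := by
    rw [← map_sub]
    congr 1
    abel
  rw [h3, h1, h2]
  abel
end
end

section
/- Let (E,T,S,e) be a conditional expectation preserving system with T strictly positive and S surjective (hence bijective, since TS = T with T strictly positive forces S injective). Then for every component q of e and every component p of q, p ≤ ⨆_{n≥1} S^{-n}q, where the supremum over n ∈ ℕ, n ≥ 1, exists in E because each S^{-n}q is a component of e. -/
noncomputable section

open Function Set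

variable {E : Type*}

section AuxLemmas

private lemma aux_swap {E : Type*} [Lattice E] [AddCommGroup E]
    [CovariantClass E E (· + ·) (· ≤ ·)] :
    CovariantClass E E (Function.swap (· + ·)) (· ≤ ·) :=
  ⟨fun a b c h => by simpa [Function.swap, add_comm] using add_le_add_left h a⟩

private lemma aux_inf_add_le {E : Type*} [Lattice E] [AddCommGroup E]
    [CovariantClass E E (· + ·) (· ≤ ·)] {a b c : E}
    (ha : 0 ≤ a) (hb : 0 ≤ b) (hc : 0 ≤ c) :
    (a + b) ⊓ c ≤ a ⊓ c + b ⊓ c := by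
  haveI := aux_swap (E := E)
  have h1 : a ⊓ c + b ⊓ c = ((a + b) ⊓ (a + c)) ⊓ ((c + b) ⊓ (c + c)) := by
    rw [inf_add, add_inf, add_inf]
  rw [h1]
  refine le_inf (le_inf inf_le_left ?_) (le_inf ?_ ?_)
  · exact inf_le_right.trans (le_add_of_nonneg_left ha)
  · exact inf_le_right.trans (le_add_of_nonneg_right hb)
  · exact inf_le_right.trans (le_add_of_nonneg_left hc)

private lemma aux_sum_inf_le {E : Type*} [Lattice E] [AddCommGroup E]
    [CovariantClass E E (· + ·) (· ≤ ·)] (f : ℕ → E) (c : E)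
    (hf : ∀ n, 0 ≤ f n) (hc : 0 ≤ c) (N : ℕ) :
    (∑ n ∈ Finset.range N, f n) ⊓ c ≤ ∑ n ∈ Finset.range N, (f n ⊓ c) := by
  induction N with
  | zero => simp
  | succ k ih =>
      rw [Finset.sum_range_succ, Finset.sum_range_succ]
      have hsum : (0 : E) ≤ ∑ n ∈ Finset.range k, f n := by
        clear ih
        induction k with
        | zero => simp
        | succ m ihm =>
            rw [Finset.sum_range_succ]
            exact add_nonneg ihm (hf m)
      exact (aux_inf_add_le hsum (hf k) hc).trans (add_le_add_left ih _)

end AuxLemmas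

/-- **Poincaré recurrence in Riesz spaces:** each component `p` of a component `q` of
`e` is recurrent with respect to `q`: `p ≤ ⨆_{n ≥ 1} S⁻ⁿ q` (the supremum exists). -/
theorem poincare_recurrence {E : Type*} [ConditionallyCompleteLattice E] [AddCommGroup E]
    [Module ℝ E] [CovariantClass E E (· + ·) (· ≤ ·)] [PosSMulMono ℝ E]
    (T S : E →ₗ[ℝ] E) (e : E) (hCEPS : IsCEPS T S e)
    (hS : Function.Surjective ⇑S)
    (q p : E) (hq : IsComponent e q) (hp : IsComponent q p) :
    ∃ s : E, IsLUB (Set.range fun n : ℕ => (Function.surjInv hS)^[n + 1] q) s ∧ p ≤ s := by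
  classical
  set Sinv : E → E := Function.surjInv hS with hSinv_def
  have hSr : ∀ x, S (Sinv x) = x := fun x => Function.surjInv_eq hS x
  -- S is injective
  have hhalf : ∀ x : E, 0 ≤ x + x → 0 ≤ x := by
    intro x hx
    have h1 : (0 : E) ≤ (2 : ℝ) • x := by rwa [two_smul]
    have h2 := smul_le_smul_of_nonneg_left h1 (by norm_num : (0:ℝ) ≤ (2:ℝ)⁻¹)
    rwa [smul_zero, smul_smul, inv_mul_cancel₀ (by norm_num : (2:ℝ) ≠ 0), one_smul] at h2
  have habs_nonneg : ∀ x : E, 0 ≤ x ⊔ -x := by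
    intro x
    refine hhalf _ ?_
    calc (0 : E) = x + (-x) := by abel
      _ ≤ (x ⊔ -x) + (x ⊔ -x) := add_le_add le_sup_left le_sup_right
  have hSinj : Function.Injective ⇑S := by
    intro a b hab
    have h0 : S (a - b) = 0 := by rw [map_sub, hab, sub_self]
    have hsup : S ((a - b) ⊔ -(a - b)) = 0 := by
      rw [hCEPS.S_hom, h0, map_neg, h0, neg_zero, sup_idem]
    have hT0 : T ((a - b) ⊔ -(a - b)) = 0 := by
      rw [← hCEPS.TS, hsup, map_zero]
    have hz : (a - b) ⊔ -(a - b) = 0 := hCEPS.T_strictPos _ (habs_nonneg _) hT0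
    have h1 : a - b ≤ 0 := le_sup_left.trans_eq hz
    have h2 : -(a - b) ≤ 0 := le_sup_right.trans_eq hz
    have h3 : (0 : E) ≤ a - b := by simpa using neg_nonpos.mp h2
    have : a - b = 0 := le_antisymm h1 h3
    exact sub_eq_zero.mp this
  have hSinv_eq : ∀ {x y : E}, S y = x → Sinv x = y := by
    intro x y h; exact hSinj (by rw [hSr, h])
  have hSinv0 : Sinv 0 = 0 := hSinv_eq (map_zero S)
  have hSinvE : Sinv e = e := hSinv_eq hCEPS.Se
  have hSinvMono : Monotone Sinv := by
    intro a b hab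
    have h1 : S (Sinv a ⊔ Sinv b) = b := by
      rw [hCEPS.S_hom, hSr, hSr, sup_eq_right.mpr hab]
    have h2 : Sinv a ⊔ Sinv b = Sinv b := (hSinv_eq h1).symm
    exact le_sup_left.trans_eq h2
  have hSinf : ∀ x y : E, S (x ⊓ y) = S x ⊓ S y := by
    intro x y
    have h2 : S (x ⊓ y) + (S x ⊔ S y) = S x + S y := by
      rw [← hCEPS.S_hom, ← map_add, inf_add_sup, map_add]
    have h3 := inf_add_sup (S x) (S y)
    exact add_right_cancel (h2.trans h3.symm)
  have hSinvInf : ∀ x y : E, Sinv (x ⊓ y) = Sinv x ⊓ Sinv y := by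
    intro x y
    exact hSinv_eq (by rw [hSinf, hSr, hSr])
  have hSinvSub : ∀ x y : E, Sinv (x - y) = Sinv x - Sinv y := by
    intro x y
    exact hSinv_eq (by rw [map_sub, hSr, hSr])
  -- iterates of Sinv
  have hIter0 : ∀ n, Sinv^[n] (0 : E) = 0 := by
    intro n; induction n with
    | zero => rfl
    | succ k ih => rw [Function.iterate_succ_apply', ih, hSinv0]
  have hIterE : ∀ n, Sinv^[n] e = e := by
    intro n; induction n with
    | zero => rfl
    | succ k ih => rw [Function.iterate_succ_apply', ih, hSinvE]
  have hIterMono : ∀ n, Monotone (Sinv^[n]) := fun n => hSinvMono.iterate n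
  have hIterInf : ∀ n (x y : E), Sinv^[n] (x ⊓ y) = Sinv^[n] x ⊓ Sinv^[n] y := by
    intro n; induction n with
    | zero => intro x y; rfl
    | succ k ih =>
        intro x y
        rw [Function.iterate_succ_apply', Function.iterate_succ_apply',
          Function.iterate_succ_apply', ih, hSinvInf]
  have hT_Sinv : ∀ x : E, T (Sinv x) = T x := by
    intro x
    have h := hCEPS.TS (Sinv x)
    rw [hSr] at h
    exact h.symm
  have hT_iter : ∀ n (x : E), T (Sinv^[n] x) = T x := by
    intro n; induction n with
    | zero => intro x; rfl
    | succ k ih => intro x; rw [Function.iterate_succ_apply', hT_Sinv, ih]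
  have hTmono : ∀ {a b : E}, a ≤ b → T a ≤ T b := by
    intro a b hab
    have := hCEPS.T_pos _ (sub_nonneg.mpr hab)
    rw [map_sub] at this
    exact sub_nonneg.mp this
  -- components
  have hCompStep : ∀ x : E, IsComponent e x → IsComponent e (Sinv x) := by
    rintro x ⟨h0, h1, h2⟩
    refine ⟨by simpa [hSinv0] using hSinvMono h0,
      by simpa [hSinvE] using hSinvMono h1, ?_⟩
    rw [show e - Sinv x = Sinv (e - x) by rw [hSinvSub, hSinvE], ← hSinvInf, h2, hSinv0]
  set c : ℕ → E := fun n : ℕ => Sinv^[n + 1] q with hc_def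
  have hce : ∀ n, IsComponent e (c n) := by
    intro n; induction n with
    | zero => exact hCompStep q hq
    | succ k ih =>
        have : c (k + 1) = Sinv (c k) := by
          simp only [hc_def, Function.iterate_succ_apply']
        rw [this]; exact hCompStep _ ih
  have hbdd : BddAbove (Set.range c) := by
    refine ⟨e, ?_⟩; rintro _ ⟨n, rfl⟩; exact (hce n).2.1
  have hne : (Set.range c).Nonempty := ⟨c 0, ⟨0, rfl⟩⟩
  set s : E := sSup (Set.range c) with hs_def
  have hs : IsLUB (Set.range c) s := isLUB_csSup hne hbdd
  refine ⟨s, hs, ?_⟩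
  have hsle : s ≤ e := hs.2 fun x hx => by obtain ⟨n, rfl⟩ := hx; exact (hce n).2.1
  have hcns : ∀ n, c n ≤ s := fun n => hs.1 ⟨n, rfl⟩
  have hs0 : (0 : E) ≤ s := (hce 0).1.trans (hcns 0)
  -- p is a component of e
  have hpq : p ≤ q := hp.2.1
  have hpe : p ≤ e := hpq.trans hq.2.1
  have heqp : (e - q) ⊓ p = 0 := by
    refine le_antisymm ?_ (le_inf (sub_nonneg.mpr hq.2.1) hp.1)
    calc (e - q) ⊓ p ≤ (e - q) ⊓ q := inf_le_inf_left _ hpq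
      _ = 0 := hq.2.2
  -- s is a component of e : (e - s) ⊓ s = 0
  have hdisj : ∀ n, (e - s) ⊓ c n = 0 := by
    intro n
    refine le_antisymm ?_ (le_inf (sub_nonneg.mpr hsle) (hce n).1)
    calc (e - s) ⊓ c n ≤ (e - c n) ⊓ c n :=
          inf_le_inf_right _ (sub_le_sub_left (hcns n) e)
      _ = 0 := (hce n).2.2
  have hsComp : (e - s) ⊓ s = 0 := by
    refine le_antisymm ?_ (le_inf (sub_nonneg.mpr hsle) hs0)
    have hub : ∀ n, c n ≤ ((e - s) ⊔ s) - (e - s) := by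
      intro n
      have hkey : (e - s) ⊔ c n = (e - s) + c n := by
        have h := inf_add_sup (e - s) (c n)
        rw [hdisj n, zero_add] at h
        exact h
      have h1 : (e - s) + c n ≤ (e - s) ⊔ s :=
        hkey.symm.trans_le (sup_le_sup_left (hcns n) _)
      rw [add_comm] at h1
      exact le_sub_iff_add_le.mpr h1
    have h2 : s ≤ ((e - s) ⊔ s) - (e - s) := hs.2 fun x hx => by
      obtain ⟨n, rfl⟩ := hx; exact hub n
    have h3 : (e - s) + s ≤ (e - s) ⊔ s := by
      have h := le_sub_iff_add_le.mp h2
      rwa [add_comm] at h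
    have h4 := inf_add_sup (e - s) s
    -- (e-s) ⊓ s = (e-s) + s - ((e-s) ⊔ s) ≤ 0
    have h5 : (e - s) ⊓ s + ((e - s) ⊔ s) ≤ 0 + ((e - s) ⊔ s) := by
      rw [h4, zero_add]; exact h3
    exact le_of_add_le_add_right h5
  -- the remainder r
  set r : E := p - p ⊓ s with hr_def
  have hr0 : (0 : E) ≤ r := sub_nonneg.mpr inf_le_left
  have hrp : r ≤ p := sub_le_self p (le_inf hp.1 hs0)
  have hres : r ≤ e - s := by
    have h := inf_add_sup p s
    have h1 : r + s = p ⊔ s := by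
      rw [hr_def]
      have : p - p ⊓ s + s = p + s - p ⊓ s := by abel
      rw [this, ← h]; abel
    have h2 : p ⊔ s ≤ e := sup_le hpe hsle
    have h3 : r + s ≤ e := h1.trans_le h2
    exact le_sub_iff_add_le.mpr h3
  have hrs : r ⊓ s = 0 :=
    le_antisymm ((inf_le_inf_right s hres).trans_eq hsComp) (le_inf hr0 hs0)
  -- disjointness of iterates of r
  have hrq : r ≤ q := hrp.trans hpq
  have hrIter0 : ∀ n, (0 : E) ≤ Sinv^[n] r := by
    intro n
    have := hIterMono n hr0
    rwa [hIter0 n] at this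
  have hrIterE : ∀ n, Sinv^[n] r ≤ e := by
    intro n
    have := hIterMono n (hrp.trans hpe)
    rwa [hIterE n] at this
  have hrdisj1 : ∀ k, r ⊓ Sinv^[k + 1] r = 0 := by
    intro k
    have h1 : Sinv^[k + 1] r ≤ c k := hIterMono (k + 1) hrq
    have h2 : r ⊓ Sinv^[k + 1] r ≤ r ⊓ s :=
      inf_le_inf_left _ (h1.trans (hcns k))
    exact le_antisymm (h2.trans_eq hrs) (le_inf hr0 (hrIter0 _))
  have hpair : ∀ m n, m < n → Sinv^[m] r ⊓ Sinv^[n] r = 0 := by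
    intro m n hmn
    obtain ⟨k, rfl⟩ : ∃ k, n = m + (k + 1) := ⟨n - m - 1, by omega⟩
    rw [Function.iterate_add_apply, ← hIterInf, hrdisj1, hIter0]
  -- partial sums
  set u : ℕ → E := fun N => ∑ n ∈ Finset.range N, Sinv^[n] r with hu_def
  have hue : ∀ N, 0 ≤ u N ∧ u N ≤ e := by
    intro N; induction N with
    | zero => exact ⟨le_refl 0, hCEPS.unit.1.le⟩
    | succ k ih =>
        have hun : u (k + 1) = u k + Sinv^[k] r := Finset.sum_range_succ _ _
        have hudisj : u k ⊓ Sinv^[k] r = 0 := by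
          refine le_antisymm ?_ (le_inf ih.1 (hrIter0 k))
          calc u k ⊓ Sinv^[k] r
              ≤ ∑ n ∈ Finset.range k, (Sinv^[n] r ⊓ Sinv^[k] r) :=
                aux_sum_inf_le _ _ hrIter0 (hrIter0 k) k
            _ = 0 := by
                refine Finset.sum_eq_zero fun n hn => ?_
                exact hpair n k (Finset.mem_range.mp hn)
        have hsum_sup : u k + Sinv^[k] r = u k ⊔ Sinv^[k] r := by
          have h := inf_add_sup (u k) (Sinv^[k] r)
          rw [hudisj, zero_add] at h
          exact h.symm
        constructor
        · rw [hun]; exact add_nonneg ih.1 (hrIter0 k)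
        · rw [hun, hsum_sup]; exact sup_le ih.2 (hrIterE k)
  have hTu : ∀ N, T (u N) = N • T r := by
    intro N
    rw [hu_def]
    simp only [map_sum]
    rw [Finset.sum_congr rfl fun n _ => hT_iter n r, Finset.sum_const, Finset.card_range]
  have hNsmul : ∀ N : ℕ, N • T r ≤ e := by
    intro N
    calc N • T r = T (u N) := (hTu N).symm
      _ ≤ T e := hTmono (hue N).2
      _ = e := hCEPS.Te
  -- Archimedean step
  have hTr0 : (0 : E) ≤ T r := hCEPS.T_pos r hr0
  have hTr : T r = 0 := by
    set A : Set E := Set.range (fun N : ℕ => N • T r) with hA_def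
    have hAne : A.Nonempty := ⟨0 • T r, ⟨0, rfl⟩⟩
    have hAbdd : BddAbove A := ⟨e, by rintro _ ⟨N, rfl⟩; exact hNsmul N⟩
    have hA : IsLUB A (sSup A) := isLUB_csSup hAne hAbdd
    have h1 : ∀ N : ℕ, N • T r ≤ sSup A - T r := by
      intro N
      have h2 : (N + 1) • T r ≤ sSup A := hA.1 ⟨N + 1, rfl⟩
      rw [succ_nsmul] at h2
      exact le_sub_iff_add_le.mpr h2
    have h3 : sSup A ≤ sSup A - T r := hA.2 fun x hx => by
      obtain ⟨N, rfl⟩ := hx; exact h1 N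
    have h4 : T r ≤ 0 := by
      have h := le_sub_iff_add_le.mp h3
      rw [add_comm] at h
      exact (add_le_iff_nonpos_left).mp h
    exact le_antisymm h4 hTr0
  have hrz : r = 0 := hCEPS.T_strictPos r hr0 hTr
  have hps : p = p ⊓ s := by
    rw [hr_def] at hrz
    exact sub_eq_zero.mp hrz
  calc p = p ⊓ s := hps
    _ ≤ s := inf_le_right
end
end

section
/- Let (E,T,S,e) be a conditional expectation preserving system with T strictly positive and S surjective. Then for each component p of e, the components q(p,k), k ≥ 1, are pairwise disjoint and p = ⨆_{N≥1} ∑_{k=1}^{N} q(p,k); that is, the series ∑_{k=1}^{∞} q(p,k) order converges in E to p. -/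
noncomputable section

open Function Set

variable {E : Type*}

section Helpers

set_option linter.unusedSectionVars false

variable {F : Type*} [Lattice F] [AddCommGroup F] [CovariantClass F F (· + ·) (· ≤ ·)]

private lemma my_inf_sup (a b c : F) : a ⊓ (b ⊔ c) = (a ⊓ b) ⊔ (a ⊓ c) := by
  letI : DistribLattice F := AddCommGroup.toDistribLattice F
  exact inf_sup_left a b c

private lemma disj_add {a b : F} (h : a ⊓ b = 0) : a + b = a ⊔ b := by
  rw [← inf_add_sup, h, zero_add]

private lemma inf_add_le {a b c : F} (ha : 0 ≤ a) (hb : 0 ≤ b) (hc : 0 ≤ c) :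
    c ⊓ (a + b) ≤ c ⊓ a + c ⊓ b := by
  rw [← sub_le_iff_le_add', sub_inf]
  apply sup_le
  · exact sub_le_iff_le_add'.2 (inf_le_left.trans
      (le_add_of_nonneg_right (le_inf hc hb)))
  · exact le_inf (sub_le_iff_le_add.2 (inf_le_left.trans (le_add_of_nonneg_right ha)))
      (sub_le_iff_le_add'.2 inf_le_right)

private lemma comp_zero {e : F} (he : 0 ≤ e) : IsComponent e 0 :=
  ⟨le_rfl, he, by rw [inf_eq_right.2 (by simpa using he)]⟩

private lemma comp_inf {e a b : F} (ha : IsComponent e a) (hb : IsComponent e b) :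
    IsComponent e (a ⊓ b) := by
  refine ⟨le_inf ha.1 hb.1, inf_le_left.trans ha.2.1, ?_⟩
  rw [sub_inf, inf_comm, my_inf_sup]
  have h1 : a ⊓ b ⊓ (e - a) = 0 := le_antisymm
    ((inf_le_inf_right _ inf_le_left).trans (le_of_eq (by rw [inf_comm]; exact ha.2.2)))
    (le_inf (le_inf ha.1 hb.1) (sub_nonneg.2 ha.2.1))
  have h2 : a ⊓ b ⊓ (e - b) = 0 := le_antisymm
    ((inf_le_inf_right _ inf_le_right).trans (le_of_eq (by rw [inf_comm]; exact hb.2.2)))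
    (le_inf (le_inf ha.1 hb.1) (sub_nonneg.2 hb.2.1))
  rw [h1, h2, sup_idem]

private lemma comp_sup {e a b : F} (ha : IsComponent e a) (hb : IsComponent e b) :
    IsComponent e (a ⊔ b) := by
  refine ⟨ha.1.trans le_sup_left, sup_le ha.2.1 hb.2.1, ?_⟩
  have h1 : (e - a) ⊓ (e - b) ⊓ a = 0 := le_antisymm
    ((inf_le_inf_right a inf_le_left).trans (le_of_eq ha.2.2))
    (le_inf (le_inf (sub_nonneg.2 ha.2.1) (sub_nonneg.2 hb.2.1)) ha.1)
  have h2 : (e - a) ⊓ (e - b) ⊓ b = 0 := le_antisymm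
    ((inf_le_inf_right b inf_le_right).trans (le_of_eq hb.2.2))
    (le_inf (le_inf (sub_nonneg.2 ha.2.1) (sub_nonneg.2 hb.2.1)) hb.1)
  rw [sub_sup, my_inf_sup, h1, h2, sup_idem]

private lemma comp_sup_compl {e a : F} (ha : IsComponent e a) : a ⊔ (e - a) = e := by
  rw [← disj_add (by rw [inf_comm]; exact ha.2.2), add_sub_cancel]

private lemma comp_add {e a b : F} (ha : IsComponent e a) (hb : IsComponent e b)
    (h : a ⊓ b = 0) : IsComponent e (a + b) := by
  rw [disj_add h]; exact comp_sup ha hb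

end Helpers

section CCLHelpers

variable {F : Type*} [ConditionallyCompleteLattice F] [AddCommGroup F]
  [CovariantClass F F (· + ·) (· ≤ ·)]

private lemma arch {x e : F} (hx : 0 ≤ x) (h : ∀ n : ℕ, n • x ≤ e) : x = 0 := by
  have hne : (Set.range fun n : ℕ => n • x).Nonempty := ⟨0 • x, ⟨0, rfl⟩⟩
  have hbdd : BddAbove (Set.range fun n : ℕ => n • x) := ⟨e, by rintro _ ⟨n, rfl⟩; exact h n⟩
  have hlub : IsLUB (Set.range fun n : ℕ => n • x) (sSup (Set.range fun n : ℕ => n • x)) :=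
    isLUB_csSup hne hbdd
  set s := sSup (Set.range fun n : ℕ => n • x)
  have h2 : ∀ n : ℕ, n • x ≤ s - x := fun n =>
    le_sub_iff_add_le.2 (by rw [← succ_nsmul]; exact hlub.1 ⟨n + 1, rfl⟩)
  have h3 : s ≤ s - x := hlub.2 (by rintro _ ⟨n, rfl⟩; exact h2 n)
  have h4 : x ≤ 0 := by
    have := le_sub_iff_add_le.1 h3
    simpa using this
  exact le_antisymm h4 hx

private lemma inf_lub_le {D : Set F} {s x c : F} (h : IsLUB D s)
    (hub : ∀ b ∈ D, x ⊓ b ≤ c) : x ⊓ s ≤ c := by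
  have key : ∀ b ∈ D, b ≤ s - x ⊓ s + c := by
    intro b hb
    have h1 : x ⊓ s - (s - b) ≤ x ⊓ b := by
      refine le_inf (sub_le_iff_le_add.2 (inf_le_left.trans
        (le_add_of_nonneg_right (sub_nonneg.2 (h.1 hb))))) ?_
      have : x ⊓ s ≤ b + (s - b) := by rw [add_sub_cancel]; exact inf_le_right
      exact sub_le_iff_le_add'.2 (by rwa [add_comm] at this)
    have h2 : x ⊓ s - (s - b) ≤ c := h1.trans (hub b hb)
    have h3 : x ⊓ s - (s - b) = b - (s - x ⊓ s) := by abel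
    rw [h3] at h2
    calc b ≤ c + (s - x ⊓ s) := sub_le_iff_le_add.1 h2
      _ = s - x ⊓ s + c := by abel
  have h5 : s ≤ s - x ⊓ s + c := h.2 key
  have h6 : x ⊓ s - c ≤ 0 := by
    have : s + (x ⊓ s - c) ≤ s + 0 := by
      calc s + (x ⊓ s - c) ≤ (s - x ⊓ s + c) + (x ⊓ s - c) := add_le_add h5 le_rfl
        _ = s + 0 := by abel
    exact le_of_add_le_add_left this
  simpa [sub_nonpos] using h6

end CCLHelpers


/-- The components `q(p,k)`, `k ≥ 1`, are pairwise disjoint and the series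
`∑_{k=1}^∞ q(p,k)` order converges to `p`, i.e. the partial sums have supremum `p`. -/
theorem decomposition_of_component {E : Type*} [ConditionallyCompleteLattice E]
    [AddCommGroup E] [Module ℝ E] [CovariantClass E E (· + ·) (· ≤ ·)] [PosSMulMono ℝ E]
    (T S : E →ₗ[ℝ] E) (e : E) (hCEPS : IsCEPS T S e)
    (hS : Function.Surjective ⇑S)
    (p : E) (hp : IsComponent e p) :
    (∀ k l : ℕ, 1 ≤ k → 1 ≤ l → k ≠ l →
      qComp (Function.surjInv hS) e p k ⊓ qComp (Function.surjInv hS) e p l = 0) ∧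
    IsLUB (Set.range fun N : ℕ =>
      ∑ k ∈ Finset.Icc 1 (N + 1), qComp (Function.surjInv hS) e p k) p := by
  have hunit := hCEPS.unit
  have T_pos := hCEPS.T_pos
  have T_spos := hCEPS.T_strictPos
  have Te := hCEPS.Te
  have S_hom := hCEPS.S_hom
  have Se := hCEPS.Se
  have TS := hCEPS.TS
  set g := Function.surjInv hS with hgdef
  have hgS : ∀ x, S (g x) = x := fun x => Function.surjInv_eq hS x
  have hSinj : Function.Injective ⇑S := by
    intro x y hxy
    have h1 : S (x - y) = 0 := by rw [map_sub, hxy, sub_self]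
    have h2 : S ((x - y) ⊔ (-(x - y))) = 0 := by
      rw [S_hom, map_neg, h1, neg_zero, sup_idem]
    have h3 : T ((x - y) ⊔ (-(x - y))) = 0 := by rw [← TS, h2, map_zero]
    have h4 : (x - y) ⊔ (-(x - y)) = 0 := T_spos _ (abs_nonneg (x - y)) h3
    have h5 : x - y ≤ 0 := le_sup_left.trans h4.le
    have h6 : -(x - y) ≤ 0 := le_sup_right.trans h4.le
    have h7 : x - y = 0 := le_antisymm h5 (by simpa using h6)
    exact sub_eq_zero.1 h7
  have hgS' : ∀ x, g (S x) = x := fun x => hSinj (by rw [hgS])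
  have g_add : ∀ x y, g (x + y) = g x + g y := fun x y =>
    hSinj (by rw [hgS, map_add, hgS, hgS])
  have g_sup : ∀ x y, g (x ⊔ y) = g x ⊔ g y := fun x y =>
    hSinj (by rw [hgS, S_hom, hgS, hgS])
  have g_zero : g 0 = 0 := hSinj (by rw [hgS, map_zero])
  have g_mono : Monotone g := by
    intro x y hxy
    have h := g_sup x y
    rw [sup_eq_right.2 hxy] at h
    exact sup_eq_right.1 h.symm
  have g_inf : ∀ x y, g (x ⊓ y) = g x ⊓ g y := by
    intro x y
    have h1 : g (x ⊓ y) + g (x ⊔ y) = g x + g y := by rw [← g_add, inf_add_sup, g_add]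
    have h2 : g x ⊓ g y + (g x ⊔ g y) = g x + g y := inf_add_sup _ _
    rw [g_sup] at h1
    exact add_right_cancel (h1.trans h2.symm)
  have g_e : g e = e := by have := hgS' e; rwa [Se] at this
  have g_sub : ∀ x y, g (x - y) = g x - g y := fun x y =>
    hSinj (by rw [hgS, map_sub, hgS, hgS])
  have g_comp : ∀ a, IsComponent e a → IsComponent e (g a) := by
    rintro a ⟨h0, h1, h2⟩
    refine ⟨by rw [← g_zero]; exact g_mono h0, by rw [← g_e]; exact g_mono h1, ?_⟩
    rw [← g_e, ← g_sub, ← g_inf, h2, g_zero]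
  have gk_mono : ∀ k : ℕ, Monotone (g^[k]) := fun k => g_mono.iterate k
  have gk_zero : ∀ k : ℕ, g^[k] (0 : E) = 0 := fun k => Function.iterate_fixed g_zero k
  have gk_comp : ∀ (k : ℕ) (a : E), IsComponent e a → IsComponent e (g^[k] a) := by
    intro k
    induction k with
    | zero => intro a ha; exact ha
    | succ n ih =>
      intro a ha
      rw [Function.iterate_succ_apply']
      exact g_comp _ (ih a ha)
  have gk_inf : ∀ (k : ℕ) (x y : E), g^[k] (x ⊓ y) = g^[k] x ⊓ g^[k] y := by
    intro k
    induction k with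
    | zero => intro x y; rfl
    | succ n ih =>
      intro x y
      simp only [Function.iterate_succ_apply', ih, g_inf]
  have T_g : ∀ x, T (g x) = T x := by
    intro x
    have h := TS (g x)
    rw [hgS] at h
    exact h.symm
  set R : ℕ → E := partialSup (fun j => g^[j + 1] p) with hRdef
  have R_succ : ∀ M, R (M + 1) = R M ⊔ g^[M + 1] p := fun M => rfl
  have e_pos : (0 : E) ≤ e := hunit.1.le
  have R_comp : ∀ M, IsComponent e (R M) := by
    intro M
    induction M with
    | zero => exact comp_zero e_pos
    | succ n ih => rw [R_succ]; exact comp_sup ih (gk_comp (n + 1) p hp)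
  have R_mono : Monotone R := monotone_nat_of_le_succ fun n => by rw [R_succ]; exact le_sup_left
  have P_le_R : ∀ k M : ℕ, 1 ≤ k → k ≤ M → g^[k] p ≤ R M := by
    rintro (_ | m) M hk hM
    · omega
    · exact le_trans (by rw [R_succ]; exact le_sup_right) (R_mono hM)
  have q_eq : ∀ k : ℕ, qComp g e p k = p ⊓ g^[k] p ⊓ (e - R (k - 1)) := fun k => rfl
  have q_nonneg : ∀ k, 0 ≤ qComp g e p k := by
    intro k
    rw [q_eq]
    exact le_inf (le_inf hp.1 (gk_comp k p hp).1) (sub_nonneg.2 (R_comp _).2.1)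
  have hdisj : ∀ k l : ℕ, 1 ≤ k → k < l → qComp g e p k ⊓ qComp g e p l = 0 := by
    intro k l hk hkl
    have h1 : qComp g e p k ≤ R (l - 1) := by
      rw [q_eq]
      exact (inf_le_left.trans inf_le_right).trans (P_le_R k (l - 1) hk (by omega))
    have h2 : qComp g e p l ≤ e - R (l - 1) := by rw [q_eq]; exact inf_le_right
    refine le_antisymm ?_ (le_inf (q_nonneg k) (q_nonneg l))
    calc qComp g e p k ⊓ qComp g e p l ≤ R (l - 1) ⊓ (e - R (l - 1)) := inf_le_inf h1 h2
      _ = 0 := by rw [inf_comm]; exact (R_comp (l - 1)).2.2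
  have hsum : ∀ M : ℕ, ∑ k ∈ Finset.Icc 1 M, qComp g e p k = p ⊓ R M := by
    intro M
    induction M with
    | zero =>
      rw [Finset.Icc_eq_empty (by omega), Finset.sum_empty]
      exact (inf_eq_right.2 hp.1).symm
    | succ M ih =>
      rw [Finset.sum_Icc_succ_top (by omega : 1 ≤ M + 1), ih, q_eq]
      have hred : (M + 1 - 1 : ℕ) = M := by omega
      rw [hred, R_succ, my_inf_sup]
      have hd : (p ⊓ R M) ⊓ ((p ⊓ g^[M + 1] p) ⊓ (e - R M)) = 0 := by
        refine le_antisymm ?_ (le_inf (le_inf hp.1 (R_comp M).1)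
          (le_inf (le_inf hp.1 (gk_comp _ p hp).1) (sub_nonneg.2 (R_comp M).2.1)))
        calc (p ⊓ R M) ⊓ ((p ⊓ g^[M + 1] p) ⊓ (e - R M)) ≤ R M ⊓ (e - R M) :=
              inf_le_inf inf_le_right inf_le_right
          _ = 0 := by rw [inf_comm]; exact (R_comp M).2.2
      rw [show p ⊓ R M + p ⊓ g^[M + 1] p ⊓ (e - R M) =
            (p ⊓ R M) ⊔ ((p ⊓ g^[M + 1] p) ⊓ (e - R M)) from disj_add hd]
      refine le_antisymm (sup_le le_sup_left (inf_le_left.trans le_sup_right))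
        (sup_le le_sup_left ?_)
      have hxe : (p ⊓ g^[M + 1] p) ⊓ e = p ⊓ g^[M + 1] p :=
        inf_eq_left.2 (inf_le_left.trans hp.2.1)
      calc p ⊓ g^[M + 1] p = (p ⊓ g^[M + 1] p) ⊓ (R M ⊔ (e - R M)) := by
            rw [comp_sup_compl (R_comp M), hxe]
        _ = ((p ⊓ g^[M + 1] p) ⊓ R M) ⊔ ((p ⊓ g^[M + 1] p) ⊓ (e - R M)) := my_inf_sup _ _ _
        _ ≤ (p ⊓ R M) ⊔ ((p ⊓ g^[M + 1] p) ⊓ (e - R M)) :=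
            sup_le_sup_right (inf_le_inf_right _ inf_le_left) _
  set t : ℕ → E := fun N => p ⊓ R N with htdef
  have t_mono : Monotone t := fun m n h => inf_le_inf_left p (R_mono h)
  have t_le_p : ∀ N, t N ≤ p := fun N => inf_le_left
  have t_comp : ∀ N, IsComponent e (t N) := fun N => comp_inf hp (R_comp N)
  have hne : (Set.range t).Nonempty := ⟨t 0, ⟨0, rfl⟩⟩
  have hbdd : BddAbove (Set.range t) := ⟨p, by rintro _ ⟨N, rfl⟩; exact t_le_p N⟩
  have hts : IsLUB (Set.range t) (sSup (Set.range t)) := isLUB_csSup hne hbdd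
  set ts := sSup (Set.range t) with htsdef
  have ts_le_p : ts ≤ p := hts.2 (by rintro _ ⟨N, rfl⟩; exact t_le_p N)
  have ts_nonneg : (0 : E) ≤ ts := (t_comp 0).1.trans (hts.1 ⟨0, rfl⟩)
  set w := p - ts with hwdef
  have w_nonneg : 0 ≤ w := sub_nonneg.2 ts_le_p
  have w_le_p : w ≤ p := sub_le_self p ts_nonneg
  have w_inf_ts : w ⊓ ts = 0 := by
    refine le_antisymm (inf_lub_le hts ?_) (le_inf w_nonneg ts_nonneg)
    rintro _ ⟨N, rfl⟩
    calc w ⊓ t N ≤ (e - t N) ⊓ t N :=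
          inf_le_inf_right _ (sub_le_sub hp.2.1 (hts.1 ⟨N, rfl⟩))
      _ = 0 := (t_comp N).2.2
  have w_inf_P : ∀ k : ℕ, 1 ≤ k → w ⊓ g^[k] p = 0 := by
    intro k hk
    refine le_antisymm ?_ (le_inf w_nonneg (gk_comp k p hp).1)
    calc w ⊓ g^[k] p ≤ w ⊓ ts := le_inf inf_le_left
          ((inf_le_inf_right _ w_le_p).trans
            ((inf_le_inf_left p (P_le_R k k hk le_rfl)).trans (hts.1 ⟨k, rfl⟩)))
      _ = 0 := w_inf_ts
  have w_comp : IsComponent e w := by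
    refine ⟨w_nonneg, w_le_p.trans hp.2.1, ?_⟩
    have hew : e - w = (e - p) + ts := by rw [hwdef]; abel
    have h1 : w ⊓ (e - p) = 0 := by
      refine le_antisymm ?_ (le_inf w_nonneg (sub_nonneg.2 hp.2.1))
      calc w ⊓ (e - p) ≤ p ⊓ (e - p) := inf_le_inf_right _ w_le_p
        _ = 0 := by rw [inf_comm]; exact hp.2.2
    refine le_antisymm ?_ (le_inf (sub_nonneg.2 (w_le_p.trans hp.2.1)) w_nonneg)
    calc (e - w) ⊓ w = w ⊓ ((e - p) + ts) := by rw [hew, inf_comm]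
      _ ≤ w ⊓ (e - p) + w ⊓ ts := inf_add_le (sub_nonneg.2 hp.2.1) ts_nonneg w_nonneg
      _ = 0 := by rw [h1, w_inf_ts, add_zero]
  have W_comp : ∀ i : ℕ, IsComponent e (g^[i] w) := fun i => gk_comp i w w_comp
  have W_disj : ∀ i j : ℕ, i < j → g^[i] w ⊓ g^[j] w = 0 := by
    intro i j hij
    have hj : g^[j] w = g^[i] (g^[j - i] w) := by
      rw [← Function.iterate_add_apply]; congr 1; omega
    rw [hj, ← gk_inf]
    have hinner : w ⊓ g^[j - i] w = 0 := by
      refine le_antisymm ?_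
        (le_inf w_nonneg (by rw [← gk_zero (j - i)]; exact gk_mono _ w_nonneg))
      calc w ⊓ g^[j - i] w ≤ w ⊓ g^[j - i] p := inf_le_inf_left w (gk_mono _ w_le_p)
        _ = 0 := w_inf_P (j - i) (by omega)
    rw [hinner, gk_zero]
  have V_nonneg : ∀ n : ℕ, (0 : E) ≤ ∑ i ∈ Finset.range n, g^[i] w := by
    intro n
    induction n with
    | zero => rw [Finset.range_zero, Finset.sum_empty]
    | succ n ih =>
      rw [Finset.sum_range_succ]
      exact add_nonneg ih (W_comp n).1
  have hVW : ∀ n m : ℕ, n ≤ m → (∑ i ∈ Finset.range n, g^[i] w) ⊓ g^[m] w = 0 := by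
    intro n
    induction n with
    | zero =>
      intro m hm
      rw [Finset.range_zero, Finset.sum_empty]
      exact inf_eq_left.2 (W_comp m).1
    | succ n ih =>
      intro m hm
      refine le_antisymm ?_ (le_inf (V_nonneg (n + 1)) (W_comp m).1)
      calc (∑ i ∈ Finset.range (n + 1), g^[i] w) ⊓ g^[m] w
          = g^[m] w ⊓ ((∑ i ∈ Finset.range n, g^[i] w) + g^[n] w) := by
            rw [Finset.sum_range_succ, inf_comm]
        _ ≤ g^[m] w ⊓ (∑ i ∈ Finset.range n, g^[i] w) + g^[m] w ⊓ g^[n] w :=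
            inf_add_le (V_nonneg n) (W_comp n).1 (W_comp m).1
        _ = 0 := by
            rw [inf_comm (g^[m] w) (∑ i ∈ Finset.range n, g^[i] w), ih m (by omega),
              inf_comm (g^[m] w) (g^[n] w), W_disj n m (by omega), add_zero]
  have V_comp : ∀ n : ℕ, IsComponent e (∑ i ∈ Finset.range n, g^[i] w) := by
    intro n
    induction n with
    | zero =>
      rw [Finset.range_zero, Finset.sum_empty]
      exact comp_zero e_pos
    | succ n ih =>
      rw [Finset.sum_range_succ]
      exact comp_add ih (W_comp n) (hVW n n le_rfl)
  have T_W : ∀ i : ℕ, T (g^[i] w) = T w := by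
    intro i
    induction i with
    | zero => rfl
    | succ n ih => rw [Function.iterate_succ_apply', T_g]; exact ih
  have T_mono : ∀ a b : E, a ≤ b → T a ≤ T b := by
    intro a b h
    have h2 := T_pos _ (sub_nonneg.2 h)
    rw [map_sub] at h2
    exact sub_nonneg.1 h2
  have hTVn : ∀ n : ℕ, n • T w ≤ e := by
    intro n
    have h1 : T (∑ i ∈ Finset.range n, g^[i] w) = n • T w := by
      rw [map_sum]
      simp only [T_W]
      rw [Finset.sum_const, Finset.card_range]
    calc n • T w = T (∑ i ∈ Finset.range n, g^[i] w) := h1.symm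
      _ ≤ T e := T_mono _ _ (V_comp n).2.1
      _ = e := Te
  have hTw : T w = 0 := arch (T_pos w w_nonneg) hTVn
  have hw0 : w = 0 := T_spos w w_nonneg hTw
  have hpts : p = ts := by rwa [hwdef, sub_eq_zero] at hw0
  constructor
  · intro k l hk hl hne'
    rcases lt_or_gt_of_ne hne' with h | h
    · exact hdisj k l hk h
    · rw [inf_comm]; exact hdisj l k hl h
  · have hfun : (fun N : ℕ => ∑ k ∈ Finset.Icc 1 (N + 1), qComp g e p k) =
        fun N : ℕ => t (N + 1) := funext fun N => hsum (N + 1)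
    rw [hfun]
    constructor
    · rintro _ ⟨N, rfl⟩
      exact t_le_p (N + 1)
    · intro b hb
      have hb' : ∀ N, t N ≤ b := fun N => (t_mono (Nat.le_succ N)).trans (hb ⟨N, rfl⟩)
      calc p = ts := hpts
        _ ≤ b := hts.2 (by rintro _ ⟨N, rfl⟩; exact hb' N)
end
end

section
/- Let (E,T,S,e) be a conditional expectation preserving system with T strictly positive and S surjective, and let p be a component of e. Then for all m, n ∈ ℕ and indices 0 ≤ i ≤ m−1, 0 ≤ j ≤ n−1 with (i,m) ≠ (j,n), one has S^i q(p,m) ⊓ S^j q(p,n) = 0. -/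
noncomputable section

open Function Set

variable {E : Type*}

section TowerAux
set_option linter.unusedSectionVars false

variable {E : Type*} [ConditionallyCompleteLattice E] [AddCommGroup E]
    [Module ℝ E] [CovariantClass E E (· + ·) (· ≤ ·)] [PosSMulMono ℝ E]
    {T S : E →ₗ[ℝ] E} {e : E}

/-- Distributivity of the lattice operations in a lattice ordered group. -/
lemma my_inf_sup_left (x a b : E) : x ⊓ (a ⊔ b) = (x ⊓ a) ⊔ (x ⊓ b) := by
  letI : DistribLattice E := AddCommGroup.toDistribLattice E
  exact inf_sup_left x a b

lemma ceps_S_inj (hC : IsCEPS T S e) : Function.Injective ⇑S := by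
  intro a b hab
  set f := a - b with hf
  have h0 : S f = 0 := by rw [hf, map_sub, hab, sub_self]
  have habs : S (f ⊔ -f) = 0 := by
    rw [hC.S_hom, map_neg, h0, neg_zero, sup_idem]
  have hnn : (0 : E) ≤ f ⊔ -f := abs_nonneg f
  have hT : T (f ⊔ -f) = 0 := by rw [← hC.TS, habs, map_zero]
  have hz : f ⊔ -f = 0 := hC.T_strictPos _ hnn hT
  have h1 : f ≤ 0 := le_sup_left.trans hz.le
  have h2 : -f ≤ 0 := le_sup_right.trans hz.le
  have h3 : f = 0 := le_antisymm h1 (neg_nonpos.mp h2)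
  rw [hf] at h3
  exact sub_eq_zero.mp h3

lemma ceps_S_mono_s14 (hC : IsCEPS T S e) : Monotone ⇑S := by
  intro a b h
  have hs : S (a ⊔ b) = S a ⊔ S b := hC.S_hom a b
  rw [sup_eq_right.2 h] at hs
  exact le_sup_left.trans hs.ge

lemma ceps_S_inf (hC : IsCEPS T S e) (a b : E) : S (a ⊓ b) = S a ⊓ S b := by
  have h : a ⊓ b = -(-a ⊔ -b) := by rw [neg_sup, neg_neg, neg_neg]
  rw [h, map_neg, hC.S_hom, map_neg, map_neg, neg_sup, neg_neg, neg_neg]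

section Sinv

variable (hC : IsCEPS T S e) (hS : Function.Surjective ⇑S)
include hC hS

lemma ceps_SSinv (x : E) : S (Function.surjInv hS x) = x :=
  Function.rightInverse_surjInv hS x

lemma ceps_Sinv_inf (a b : E) :
    Function.surjInv hS (a ⊓ b) = Function.surjInv hS a ⊓ Function.surjInv hS b := by
  apply ceps_S_inj hC
  rw [ceps_SSinv hC hS, ceps_S_inf hC, ceps_SSinv hC hS, ceps_SSinv hC hS]

lemma ceps_Sinv_sub (a b : E) :
    Function.surjInv hS (a - b) = Function.surjInv hS a - Function.surjInv hS b := by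
  apply ceps_S_inj hC
  rw [ceps_SSinv hC hS, map_sub, ceps_SSinv hC hS, ceps_SSinv hC hS]

lemma ceps_Sinv_zero : Function.surjInv hS (0 : E) = 0 := by
  apply ceps_S_inj hC
  rw [ceps_SSinv hC hS, map_zero]

lemma ceps_Sinv_e : Function.surjInv hS e = e := by
  apply ceps_S_inj hC
  rw [ceps_SSinv hC hS, hC.Se]

lemma ceps_Sinv_mono : Monotone (Function.surjInv hS) := by
  intro a b h
  have key : Function.surjInv hS a ⊓ Function.surjInv hS b = Function.surjInv hS a := by
    rw [← ceps_Sinv_inf hC hS, inf_eq_left.2 h]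
  exact key ▸ inf_le_right

lemma ceps_SinvIter_mono (k : ℕ) : Monotone (Function.surjInv hS)^[k] :=
  (ceps_Sinv_mono hC hS).iterate k

lemma ceps_SinvIter_zero (k : ℕ) : (Function.surjInv hS)^[k] (0 : E) = 0 :=
  Function.iterate_fixed (ceps_Sinv_zero hC hS) k

lemma ceps_SinvIter_nonneg (k : ℕ) {x : E} (hx : 0 ≤ x) :
    0 ≤ (Function.surjInv hS)^[k] x := by
  have := ceps_SinvIter_mono hC hS k hx
  rwa [ceps_SinvIter_zero hC hS] at this

lemma ceps_Sinv_component {c : E} (hc : IsComponent e c) :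
    IsComponent e (Function.surjInv hS c) := by
  refine ⟨?_, ?_, ?_⟩
  · have := ceps_Sinv_mono hC hS hc.1
    rwa [ceps_Sinv_zero hC hS] at this
  · have := ceps_Sinv_mono hC hS hc.2.1
    rwa [ceps_Sinv_e hC hS] at this
  · have h : (e - Function.surjInv hS c) ⊓ Function.surjInv hS c
        = Function.surjInv hS ((e - c) ⊓ c) := by
      rw [ceps_Sinv_inf hC hS, ceps_Sinv_sub hC hS, ceps_Sinv_e hC hS]
    rw [h, hc.2.2, ceps_Sinv_zero hC hS]

lemma ceps_SinvIter_component {c : E} (hc : IsComponent e c) (k : ℕ) :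
    IsComponent e ((Function.surjInv hS)^[k] c) := by
  induction k with
  | zero => exact hc
  | succ k ih =>
      rw [Function.iterate_succ_apply']
      exact ceps_Sinv_component hC hS ih

lemma ceps_comp_sup {a b : E} (ha : IsComponent e a) (hb : IsComponent e b) :
    IsComponent e (a ⊔ b) := by
  refine ⟨ha.1.trans le_sup_left, sup_le ha.2.1 hb.2.1, ?_⟩
  apply le_antisymm
  · rw [my_inf_sup_left]
    apply sup_le
    · calc (e - (a ⊔ b)) ⊓ a ≤ (e - a) ⊓ a :=
            inf_le_inf_right a (sub_le_sub_left le_sup_left e)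
        _ = 0 := ha.2.2
    · calc (e - (a ⊔ b)) ⊓ b ≤ (e - b) ⊓ b :=
            inf_le_inf_right b (sub_le_sub_left le_sup_right e)
        _ = 0 := hb.2.2
  · exact le_inf (sub_nonneg.2 (sup_le ha.2.1 hb.2.1)) (ha.1.trans le_sup_left)

lemma ceps_zero_component : IsComponent (e : E) 0 :=
  ⟨le_rfl, hC.unit.1.le, by rw [sub_zero, inf_eq_right.2 hC.unit.1.le]⟩

lemma ceps_partialSup_component {f : ℕ → E} (hf : ∀ j, IsComponent e (f j)) :
    ∀ k, IsComponent e (partialSup f k) := by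
  intro k
  induction k with
  | zero => exact ceps_zero_component hC hS
  | succ k ih => exact ceps_comp_sup hC hS ih (hf k)

lemma partialSup_le_of_lt {f : ℕ → E} {l k : ℕ} (h : l < k) : f l ≤ partialSup f k := by
  induction k with
  | zero => omega
  | succ k ih =>
      rcases Nat.lt_succ_iff_lt_or_eq.mp h with h' | h'
      · exact (ih h').trans le_sup_left
      · subst h'; exact le_sup_right

lemma ceps_SIter_inf (k : ℕ) (a b : E) :
    (⇑S)^[k] (a ⊓ b) = (⇑S)^[k] a ⊓ (⇑S)^[k] b := by
  induction k with
  | zero => rfl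
  | succ k ih =>
      rw [Function.iterate_succ_apply', Function.iterate_succ_apply',
        Function.iterate_succ_apply', ih, ceps_S_inf hC]

lemma ceps_SIter_zero (k : ℕ) : (⇑S)^[k] (0 : E) = 0 :=
  Function.iterate_fixed (map_zero S) k

lemma ceps_SIter_SinvIter (k : ℕ) (x : E) :
    (⇑S)^[k] ((Function.surjInv hS)^[k] x) = x :=
  ((Function.rightInverse_surjInv hS).iterate k) x

variable (p : E) (hp : IsComponent e p)
include hp

lemma ceps_q_nonneg (m : ℕ) : 0 ≤ qComp (Function.surjInv hS) e p m := by
  have hps := ceps_partialSup_component hC hS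
      (f := fun j => (Function.surjInv hS)^[j + 1] p)
      (fun j => ceps_SinvIter_component hC hS hp (j + 1)) (m - 1)
  exact le_inf (le_inf hp.1 ((ceps_SinvIter_component hC hS hp m).1))
    (sub_nonneg.2 hps.2.1)

lemma ceps_q_le_p (m : ℕ) : qComp (Function.surjInv hS) e p m ≤ p :=
  inf_le_left.trans inf_le_left

lemma ceps_q_le_Sinv (m : ℕ) :
    qComp (Function.surjInv hS) e p m ≤ (Function.surjInv hS)^[m] p :=
  inf_le_left.trans inf_le_right

lemma ceps_q_inf_Sinv {m l : ℕ} (hl1 : 1 ≤ l) (hl2 : l ≤ m - 1) :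
    qComp (Function.surjInv hS) e p m ⊓ (Function.surjInv hS)^[l] p = 0 := by
  set f : ℕ → E := fun j => (Function.surjInv hS)^[j + 1] p with hfdef
  have hps : IsComponent e (partialSup f (m - 1)) :=
    ceps_partialSup_component hC hS
      (fun j => ceps_SinvIter_component hC hS hp (j + 1)) (m - 1)
  apply le_antisymm
  · have h1 : (Function.surjInv hS)^[l] p ≤ partialSup f (m - 1) := by
      have h := partialSup_le_of_lt hC hS (f := f) (l := l - 1) (k := m - 1) (by omega)
      have heq : f (l - 1) = (Function.surjInv hS)^[l] p := by
        simp only [hfdef]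
        congr 1
        omega
      rwa [heq] at h
    calc qComp (Function.surjInv hS) e p m ⊓ (Function.surjInv hS)^[l] p
        ≤ (e - partialSup f (m - 1)) ⊓ partialSup f (m - 1) :=
          inf_le_inf inf_le_right h1
      _ = 0 := hps.2.2
  · exact le_inf (ceps_q_nonneg hC hS p hp m) (ceps_SinvIter_component hC hS hp l).1

/-- Key step 1: `S^d q(p,m) ⊓ q(p,n) = 0` for `1 ≤ d ≤ m - 1`. -/
lemma ceps_key1 {m n d : ℕ} (hd1 : 1 ≤ d) (hd2 : d ≤ m - 1) :
    (⇑S)^[d] (qComp (Function.surjInv hS) e p m) ⊓ qComp (Function.surjInv hS) e p n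
      = 0 := by
  have h3 : qComp (Function.surjInv hS) e p m ⊓
      (Function.surjInv hS)^[d] (qComp (Function.surjInv hS) e p n) = 0 := by
    apply le_antisymm
    · calc qComp (Function.surjInv hS) e p m ⊓
          (Function.surjInv hS)^[d] (qComp (Function.surjInv hS) e p n)
          ≤ qComp (Function.surjInv hS) e p m ⊓ (Function.surjInv hS)^[d] p :=
            inf_le_inf_left _ (ceps_SinvIter_mono hC hS d (ceps_q_le_p hC hS p hp n))
        _ = 0 := ceps_q_inf_Sinv hC hS p hp hd1 hd2
    · exact le_inf (ceps_q_nonneg hC hS p hp m)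
        (ceps_SinvIter_nonneg hC hS d (ceps_q_nonneg hC hS p hp n))
  calc (⇑S)^[d] (qComp (Function.surjInv hS) e p m) ⊓ qComp (Function.surjInv hS) e p n
      = (⇑S)^[d] (qComp (Function.surjInv hS) e p m) ⊓
        (⇑S)^[d] ((Function.surjInv hS)^[d] (qComp (Function.surjInv hS) e p n)) := by
        rw [ceps_SIter_SinvIter hC hS]
    _ = (⇑S)^[d] (qComp (Function.surjInv hS) e p m ⊓
        (Function.surjInv hS)^[d] (qComp (Function.surjInv hS) e p n)) :=
        (ceps_SIter_inf hC hS d _ _).symm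
    _ = 0 := by rw [h3, ceps_SIter_zero hC hS]

/-- Key step 2: `q(p,m) ⊓ q(p,n) = 0` for `1 ≤ m ≤ n - 1`. -/
lemma ceps_key2 {m n : ℕ} (hm : 1 ≤ m) (hmn : m ≤ n - 1) :
    qComp (Function.surjInv hS) e p m ⊓ qComp (Function.surjInv hS) e p n = 0 := by
  apply le_antisymm
  · calc qComp (Function.surjInv hS) e p m ⊓ qComp (Function.surjInv hS) e p n
        ≤ (Function.surjInv hS)^[m] p ⊓ qComp (Function.surjInv hS) e p n :=
          inf_le_inf_right _ (ceps_q_le_Sinv hC hS p hp m)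
      _ = qComp (Function.surjInv hS) e p n ⊓ (Function.surjInv hS)^[m] p := inf_comm _ _
      _ = 0 := ceps_q_inf_Sinv hC hS p hp hm hmn
  · exact le_inf (ceps_q_nonneg hC hS p hp m) (ceps_q_nonneg hC hS p hp n)

end Sinv

end TowerAux

/-- Disjointness of the tower pieces: `Sⁱq(p,m) ⊓ Sʲq(p,n) = 0` whenever
`0 ≤ i ≤ m-1`, `0 ≤ j ≤ n-1` and `(i,m) ≠ (j,n)`. -/
theorem tower_disjointness {E : Type*} [ConditionallyCompleteLattice E] [AddCommGroup E]
    [Module ℝ E] [CovariantClass E E (· + ·) (· ≤ ·)] [PosSMulMono ℝ E]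
    (T S : E →ₗ[ℝ] E) (e : E) (hCEPS : IsCEPS T S e)
    (hS : Function.Surjective ⇑S)
    (p : E) (hp : IsComponent e p) :
    ∀ m n i j : ℕ, 1 ≤ m → 1 ≤ n → i ≤ m - 1 → j ≤ n - 1 → (i, m) ≠ (j, n) →
      (⇑S)^[i] (qComp (Function.surjInv hS) e p m) ⊓
        (⇑S)^[j] (qComp (Function.surjInv hS) e p n) = 0 := by
  intro m n i j hm hn hi hj hne
  set q : ℕ → E := fun k => qComp (Function.surjInv hS) e p k with hq
  rcases lt_trichotomy i j with hij | rfl | hij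
  · -- i < j : factor S^[j] = S^[i] ∘ S^[j-i]
    have hsplit : (⇑S)^[j] (q n) = (⇑S)^[i] ((⇑S)^[j - i] (q n)) := by
      rw [← Function.iterate_add_apply]
      congr 1
      omega
    have hkey : (⇑S)^[j - i] (q n) ⊓ q m = 0 :=
      ceps_key1 hCEPS hS p hp (by omega) (by omega)
    calc (⇑S)^[i] (q m) ⊓ (⇑S)^[j] (q n)
        = (⇑S)^[i] (q m) ⊓ (⇑S)^[i] ((⇑S)^[j - i] (q n)) := by rw [hsplit]
      _ = (⇑S)^[i] (q m ⊓ (⇑S)^[j - i] (q n)) := (ceps_SIter_inf hCEPS hS i _ _).symm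
      _ = (⇑S)^[i] ((⇑S)^[j - i] (q n) ⊓ q m) := by rw [inf_comm]
      _ = 0 := by rw [hkey, ceps_SIter_zero hCEPS hS]
  · -- i = j : then m ≠ n
    have hmn : m ≠ n := by
      intro h
      exact hne (by rw [h])
    have hkey : q m ⊓ q n = 0 := by
      rcases lt_or_gt_of_ne hmn with h | h
      · exact ceps_key2 hCEPS hS p hp hm (by omega)
      · rw [inf_comm]
        exact ceps_key2 hCEPS hS p hp hn (by omega)
    calc (⇑S)^[i] (q m) ⊓ (⇑S)^[i] (q n)
        = (⇑S)^[i] (q m ⊓ q n) := (ceps_SIter_inf hCEPS hS i _ _).symm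
      _ = 0 := by rw [hkey, ceps_SIter_zero hCEPS hS]
  · -- j < i : factor S^[i] = S^[j] ∘ S^[i-j]
    have hsplit : (⇑S)^[i] (q m) = (⇑S)^[j] ((⇑S)^[i - j] (q m)) := by
      rw [← Function.iterate_add_apply]
      congr 1
      omega
    have hkey : (⇑S)^[i - j] (q m) ⊓ q n = 0 :=
      ceps_key1 hCEPS hS p hp (by omega) (by omega)
    calc (⇑S)^[i] (q m) ⊓ (⇑S)^[j] (q n)
        = (⇑S)^[j] ((⇑S)^[i - j] (q m)) ⊓ (⇑S)^[j] (q n) := by rw [hsplit]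
      _ = (⇑S)^[j] ((⇑S)^[i - j] (q m) ⊓ q n) := (ceps_SIter_inf hCEPS hS j _ _).symm
      _ = 0 := by rw [hkey, ceps_SIter_zero hCEPS hS]
end
end

section
/- Let (E,T,S,e) be a conditionally ergodic conditional expectation preserving system with T strictly positive and S surjective, and assume every upward directed subset D of E₊ for which {Tf : f ∈ D} is order bounded in E has a supremum in E. Then for each component p of e, the increasing sequence of partial sums ∑_{k=1}^{N} k·T(q(p,k)) has supremum P_{Tp}e in E; that is, ⨆_{N≥1} ∑_{k=1}^{N} k·T(q(p,k)) = P_{Tp}e (Kac's formula: the conditional expectation of the first recurrence time n(p) = ∑_{k≥1} k·q(p,k) equals P_{Tp}e). -/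
noncomputable section

open Function Set

variable {E : Type*}

section KacAux
variable [Lattice E] [AddCommGroup E] [CovariantClass E E (· + ·) (· ≤ ·)]

/-- `x ⊓ s ≤ x ⊓ y + (s - y)` when `y ≤ s`. -/
lemma kac_inf_le_inf_add (x y s : E) (hys : y ≤ s) : x ⊓ s ≤ x ⊓ y + (s - y) := by
  rw [← sub_le_iff_le_add]
  refine le_inf ?_ ?_
  · exact le_trans (sub_le_self _ (sub_nonneg.2 hys)) inf_le_left
  · have h : x ⊓ s - (s - y) ≤ s - (s - y) := sub_le_sub_right inf_le_right _
    simpa using h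

/-- Subadditivity of `⊓` for nonnegative elements. -/
lemma kac_inf_add_le (a b c : E) (ha : 0 ≤ a) (hb : 0 ≤ b) (hc : 0 ≤ c) :
    a ⊓ (b + c) ≤ a ⊓ b + a ⊓ c := by
  rw [← sub_le_iff_le_add']
  have h : a ⊓ (b + c) - a ⊓ b = (a ⊓ (b + c) - a) ⊔ (a ⊓ (b + c) - b) := sub_inf a b _
  rw [h]
  refine sup_le (le_trans (sub_nonpos.2 inf_le_left) (le_inf ha hc)) (le_inf ?_ ?_)
  · exact le_trans (sub_le_sub_right inf_le_left b) (sub_le_self a hb)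
  · exact sub_le_iff_le_add'.2 inf_le_right

lemma kac_disj_sup (x y z : E) (hx : 0 ≤ x) (hy : 0 ≤ y) (hz : 0 ≤ z)
    (hxy : x ⊓ y = 0) (hxz : x ⊓ z = 0) : x ⊓ (y ⊔ z) = 0 := by
  refine le_antisymm ?_ (le_inf hx (le_trans hy le_sup_left))
  calc x ⊓ (y ⊔ z) ≤ x ⊓ (y + z) :=
        inf_le_inf_left x (sup_le (le_add_of_nonneg_right hz) (le_add_of_nonneg_left hy))
    _ ≤ x ⊓ y + x ⊓ z := kac_inf_add_le x y z hx hy hz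
    _ = 0 := by rw [hxy, hxz, add_zero]

lemma kac_disj_nsmul (x y : E) (hx : 0 ≤ x) (hy : 0 ≤ y) (hxy : x ⊓ y = 0) :
    ∀ n : ℕ, x ⊓ (n • y) = 0
  | 0 => by simpa using inf_eq_right.2 hx
  | (n+1) => by
      refine le_antisymm ?_ (le_inf hx (nsmul_nonneg hy (n+1)))
      rw [succ_nsmul]
      calc x ⊓ (n • y + y) ≤ x ⊓ (n • y) + x ⊓ y :=
            kac_inf_add_le x _ y hx (nsmul_nonneg hy n) hy
        _ = 0 := by rw [hxy, kac_disj_nsmul x y hx hy hxy n, add_zero]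

/-- Decomposition along a component: `z ⊓ c + z ⊓ (e - c) = z`. -/
lemma kac_comp_decomp (e c z : E) (hc0 : 0 ≤ c) (hce : c ≤ e) (hd : (e - c) ⊓ c = 0)
    (hz0 : 0 ≤ z) (hze : z ≤ e) : z ⊓ c + z ⊓ (e - c) = z := by
  have hkey : z ⊓ (e - c) = z - z ⊓ c := by
    have h1 : z - z ⊓ c = 0 ⊔ (z - c) := by rw [sub_inf, sub_self]
    rw [h1]
    refine le_antisymm ?_ (sup_le (le_inf hz0 (sub_nonneg.2 hce))
      (le_inf (sub_le_self z hc0) (sub_le_sub_right hze c)))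
    have hu : (z ⊓ (e - c)) ⊓ c = 0 := by
      refine le_antisymm (le_trans (inf_le_inf_right c inf_le_right) hd.le)
        (le_inf (le_inf hz0 (sub_nonneg.2 hce)) hc0)
    have h3 : z ⊓ (e - c) = 0 ⊔ (z ⊓ (e - c) - c) := by
      have h2 : z ⊓ (e - c) - (z ⊓ (e - c)) ⊓ c = 0 ⊔ (z ⊓ (e - c) - c) := by
        rw [sub_inf, sub_self]
      rw [← h2, hu, sub_zero]
    rw [h3]
    exact sup_le_sup_left (sub_le_sub_right inf_le_left c) 0
  rw [hkey, add_sub_cancel]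

lemma kac_comp_nsmul_le (e c : E) (hc0 : 0 ≤ c) (hce : c ≤ e) (hd : (e - c) ⊓ c = 0) :
    ∀ n : ℕ, e ⊓ (n • c) ≤ c
  | 0 => by simpa using le_trans inf_le_right hc0
  | (n+1) => by
      have h1 : e ⊓ ((n+1) • c) - c ≤ (e - c) ⊓ (n • c) := by
        refine le_inf (sub_le_sub_right inf_le_left c) ?_
        have h2 : e ⊓ ((n+1) • c) ≤ n • c + c := by rw [← succ_nsmul]; exact inf_le_right
        exact sub_le_iff_le_add.2 h2
      rw [kac_disj_nsmul (e - c) c (sub_nonneg.2 hce) hc0 hd n] at h1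
      exact sub_nonpos.1 h1

end KacAux

/-- **Kac's formula in Riesz spaces:** the partial sums `∑_{k=1}^{N} k·T(q(p,k))` have
supremum `P_{Tp}e` in `E`. -/
theorem kac_formula {E : Type*} [ConditionallyCompleteLattice E] [AddCommGroup E]
    [Module ℝ E] [CovariantClass E E (· + ·) (· ≤ ·)] [PosSMulMono ℝ E]
    (T S : E →ₗ[ℝ] E) (e : E) (hCEPS : IsCEPS T S e)
    (hErg : {f : E | S f = f} = Set.range T)
    (hTuc : TUnivComplete T)
    (hS : Function.Surjective ⇑S)
    (p : E) (hp : IsComponent e p) :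
    IsLUB (Set.range fun N : ℕ =>
        ∑ k ∈ Finset.Icc 1 (N + 1), k • T (qComp (Function.surjInv hS) e p k))
      (bandProjApp (T p) e) := by
  classical
  letI : IsOrderedAddMonoid E :=
    { add_le_add_left := fun a b h c => add_le_add_left h c }
  obtain ⟨hp0, hpe, hpd⟩ := hp
  have he0 : (0:E) ≤ e := hCEPS.unit.1.le
  set R : E → E := Function.surjInv hS with hRdef
  have hSR : ∀ x, S (R x) = x := fun x => Function.surjInv_eq hS x
  have hTmono : ∀ {x y : E}, x ≤ y → T x ≤ T y := by
    intro x y h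
    have h2 := hCEPS.T_pos (y - x) (sub_nonneg.2 h)
    rw [map_sub] at h2
    exact sub_nonneg.1 h2
  have hSmono : ∀ {x y : E}, x ≤ y → S x ≤ S y := by
    intro x y h
    have h2 : S x ⊔ S y = S y := by rw [← hCEPS.S_hom, sup_eq_right.2 h]
    exact sup_eq_right.1 h2
  have habs : ∀ x : E, (0:E) ≤ x ⊔ -x := fun x => by
    have h := abs_nonneg x
    simpa [abs] using h
  have hSzero : ∀ x : E, S x = 0 → x = 0 := by
    intro x hx
    have h1 : S (x ⊔ -x) = 0 := by rw [hCEPS.S_hom, map_neg, hx, neg_zero, sup_idem]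
    have h2 : T (x ⊔ -x) = 0 := by rw [← hCEPS.TS, h1, map_zero]
    have h3 := hCEPS.T_strictPos _ (habs x) h2
    have h4 : x ≤ 0 := le_sup_left.trans h3.le
    have h5 : -x ≤ 0 := le_sup_right.trans h3.le
    exact le_antisymm h4 (neg_nonpos.1 h5)
  have hSinj : Function.Injective S := by
    intro x y hxy
    have h1 : S (x - y) = 0 := by rw [map_sub, hxy, sub_self]
    exact sub_eq_zero.1 (hSzero _ h1)
  have hRsup : ∀ x y, R (x ⊔ y) = R x ⊔ R y := fun x y =>
    hSinj (by rw [hSR, hCEPS.S_hom, hSR, hSR])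
  have hRzero : R 0 = 0 := hSinj (by rw [hSR, map_zero])
  have hRsub : ∀ x y, R (x - y) = R x - R y := fun x y =>
    hSinj (by rw [hSR, map_sub, hSR, hSR])
  have hRe : R e = e := hSinj (by rw [hSR, hCEPS.Se])
  have hRmono : ∀ {x y : E}, x ≤ y → R x ≤ R y := by
    intro x y h
    have h2 : R x ⊔ R y = R y := by rw [← hRsup, sup_eq_right.2 h]
    exact sup_eq_right.1 h2
  have hSinf : ∀ x y, S (x ⊓ y) = S x ⊓ S y := by
    intro x y
    have h1 : x ⊓ y = x + y - (x ⊔ y) := by rw [← inf_add_sup, add_sub_cancel_right]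
    rw [h1, map_sub, map_add, hCEPS.S_hom, ← inf_add_sup (S x) (S y), add_sub_cancel_right]
  have hRinf : ∀ x y, R (x ⊓ y) = R x ⊓ R y := fun x y =>
    hSinj (by rw [hSR, hSinf, hSR, hSR])
  have hTR : ∀ x, T (R x) = T x := by
    intro x
    have h2 := hCEPS.TS (R x)
    rw [hSR] at h2
    exact h2.symm
  -- the iterates of `p`
  set A : ℕ → E := fun i => R^[i] p with hAdef
  have hA0 : A 0 = p := rfl
  have hAsucc : ∀ i, A (i+1) = R (A i) := fun i => Function.iterate_succ_apply' R i p
  have hSA : ∀ i, S (A (i+1)) = A i := fun i => by rw [hAsucc i]; exact hSR (A i)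
  have hA_nonneg : ∀ i, 0 ≤ A i := by
    intro i; induction i with
    | zero => exact hp0
    | succ n ih => rw [hAsucc n, ← hRzero]; exact hRmono ih
  have hA_le : ∀ i, A i ≤ e := by
    intro i; induction i with
    | zero => exact hpe
    | succ n ih => rw [hAsucc n, ← hRe]; exact hRmono ih
  have hAcomp : ∀ i, (e - A i) ⊓ A i = 0 := by
    intro i; induction i with
    | zero => exact hpd
    | succ n ih => rw [hAsucc n, ← hRe, ← hRsub, ← hRinf, ih, hRzero]
  -- partial suprema
  set pb : ℕ → E := partialSup A with hpbdef
  set pb' : ℕ → E := partialSup (fun i => A (i+1)) with hpb'def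
  have hpb0 : pb 0 = 0 := rfl
  have hpbs : ∀ n, pb (n+1) = pb n ⊔ A n := fun n => rfl
  have hpb'0 : pb' 0 = 0 := rfl
  have hpb's : ∀ n, pb' (n+1) = pb' n ⊔ A (n+1) := fun n => rfl
  have hpb_nonneg : ∀ n, 0 ≤ pb n := by
    intro n; induction n with
    | zero => exact le_refl 0
    | succ n ih => rw [hpbs n]; exact le_trans ih le_sup_left
  have hpb_le : ∀ n, pb n ≤ e := by
    intro n; induction n with
    | zero => exact he0
    | succ n ih => rw [hpbs n]; exact sup_le ih (hA_le n)
  have hpb'_le : ∀ n, pb' n ≤ e := by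
    intro n; induction n with
    | zero => exact he0
    | succ n ih => rw [hpb's n]; exact sup_le ih (hA_le (n+1))
  have hpb_mono : Monotone pb :=
    monotone_nat_of_le_succ (fun n => by rw [hpbs n]; exact le_sup_left)
  have hRpb : ∀ n, R (pb n) = pb' n := by
    intro n; induction n with
    | zero => rw [hpb0, hpb'0, hRzero]
    | succ n ih => rw [hpbs n, hpb's n, hRsup, ih, ← hAsucc n]
  have hpb_split : ∀ n, pb (n+1) = p ⊔ pb' n := by
    intro n; induction n with
    | zero => rw [hpbs 0, hpb0, hpb'0, hA0, sup_comm]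
    | succ n ih => rw [hpbs (n+1), ih, hpb's n, sup_assoc]
  -- the sets `b` (no visit up to time n-1) and `hh` (first visit at time n)
  set b : ℕ → E := fun n => e - pb n with hbdef
  set hh : ℕ → E := fun n => b n ⊓ A n with hhdef
  have hb0 : b 0 = e := by show e - pb 0 = e; rw [hpb0, sub_zero]
  have hb_nonneg : ∀ n, 0 ≤ b n := fun n => sub_nonneg.2 (hpb_le n)
  have hb_le : ∀ n, b n ≤ e := fun n => sub_le_self e (hpb_nonneg n)
  have hh_nonneg : ∀ n, 0 ≤ hh n := fun n => le_inf (hb_nonneg n) (hA_nonneg n)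
  have hb_anti : ∀ {m n : ℕ}, m ≤ n → b n ≤ b m := fun {m n} h =>
    sub_le_sub_left (hpb_mono h) e
  have hbsucc : ∀ n, b (n+1) = b n ⊓ (e - A n) := by
    intro n; show e - pb (n+1) = (e - pb n) ⊓ (e - A n)
    rw [hpbs n, sub_sup]
  have hstep1 : ∀ n, hh n + b (n+1) = b n := by
    intro n
    rw [hbsucc n]
    exact kac_comp_decomp e (A n) (b n) (hA_nonneg n) (hA_le n) (hAcomp n)
      (hb_nonneg n) (hb_le n)
  -- basic facts about `q`
  have hq_eq : ∀ j, qComp R e p (j+1) = p ⊓ A (j+1) ⊓ (e - pb' j) := fun j => rfl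
  have hq_nonneg : ∀ k, 0 ≤ qComp R e p k := by
    intro k
    show 0 ≤ p ⊓ A k ⊓ (e - pb' (k-1))
    exact le_inf (le_inf hp0 (hA_nonneg k)) (sub_nonneg.2 (hpb'_le (k-1)))
  have hq_le_p : ∀ k, qComp R e p k ≤ p := by
    intro k
    show p ⊓ A k ⊓ (e - pb' (k-1)) ≤ p
    exact le_trans inf_le_left inf_le_left
  -- the fundamental recursion
  have hstep2 : ∀ j, T (hh j) = T (qComp R e p (j+1)) + T (hh (j+1)) := by
    intro j
    have hz : R (hh j) = (e - pb' j) ⊓ A (j+1) := by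
      show R ((e - pb j) ⊓ A j) = _
      rw [hRinf, hRsub, hRe, hRpb j, ← hAsucc j]
    have hz0 : 0 ≤ R (hh j) := by
      rw [hz]; exact le_inf (sub_nonneg.2 (hpb'_le j)) (hA_nonneg (j+1))
    have hze : R (hh j) ≤ e := by rw [hz]; exact le_trans inf_le_right (hA_le (j+1))
    have hdec := kac_comp_decomp e p (R (hh j)) hp0 hpe hpd hz0 hze
    have h1 : R (hh j) ⊓ p = qComp R e p (j+1) := by
      rw [hz, hq_eq j]
      simp only [inf_comm, inf_left_comm, inf_assoc]
    have h2 : R (hh j) ⊓ (e - p) = hh (j+1) := by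
      rw [hz]
      show (e - pb' j) ⊓ A (j+1) ⊓ (e - p) = (e - pb (j+1)) ⊓ A (j+1)
      rw [hpb_split j, sub_sup]
      simp only [inf_comm, inf_left_comm, inf_assoc]
    calc T (hh j) = T (R (hh j)) := (hTR _).symm
      _ = T (R (hh j) ⊓ p + R (hh j) ⊓ (e - p)) := by rw [hdec]
      _ = T (qComp R e p (j+1)) + T (hh (j+1)) := by rw [h1, h2, map_add]
  have hTb_nonneg : ∀ n, 0 ≤ T (b n) := fun n => hCEPS.T_pos _ (hb_nonneg n)
  have hTh_nonneg : ∀ n, 0 ≤ T (hh n) := fun n => hCEPS.T_pos _ (hh_nonneg n)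
  have hTq_nonneg : ∀ k, 0 ≤ T (qComp R e p k) := fun k => hCEPS.T_pos _ (hq_nonneg k)
  have hTh_anti : ∀ {i j : ℕ}, i ≤ j → T (hh j) ≤ T (hh i) := by
    have hone : ∀ n, T (hh (n+1)) ≤ T (hh n) := by
      intro n
      rw [hstep2 n]
      exact le_add_of_nonneg_left (hTq_nonneg (n+1))
    have hanti : Antitone (fun n => T (hh n)) := antitone_nat_of_succ_le hone
    intro i j hij
    exact hanti hij
  have hTb_anti : ∀ {i j : ℕ}, i ≤ j → T (b j) ≤ T (b i) := fun {i j} hij =>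
    hTmono (hb_anti hij)
  -- the key closed formula for partial sums
  have key : ∀ N, ∑ k ∈ Finset.Ioc 0 N, k • T (qComp R e p k)
      = e - T (b N) - N • T (hh N) := by
    intro N; induction N with
    | zero => simp [hb0, hCEPS.Te]
    | succ N ih =>
      rw [Finset.sum_Ioc_succ_top (Nat.zero_le N), ih]
      have e1 : T (qComp R e p (N+1)) = T (hh N) - T (hh (N+1)) :=
        eq_sub_of_add_eq (hstep2 N).symm
      have e2 : T (b (N+1)) = T (b N) - T (hh N) := by
        have h3 := congrArg T (hstep1 N)
        rw [map_add] at h3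
        exact eq_sub_of_add_eq' h3
      rw [e1, e2, nsmul_sub]
      simp only [succ_nsmul]
      abel
  have hF : ∀ N : ℕ, ∑ k ∈ Finset.Icc 1 (N+1), k • T (qComp R e p k)
      = e - T (b (N+1)) - (N+1) • T (hh (N+1)) := by
    intro N
    rw [show Finset.Icc 1 (N+1) = Finset.Ioc 0 (N+1) from Finset.Icc_add_one_left_eq_Ioc 0 (N+1)]
    exact key (N+1)
  -- the invariant element `a`
  have hpb_bdd : BddAbove (Set.range pb) := ⟨e, by rintro x ⟨M, rfl⟩; exact hpb_le M⟩
  set a : E := sSup (Set.range pb) with hadefn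
  have haLUB : IsLUB (Set.range pb) a := isLUB_csSup ⟨pb 0, Set.mem_range_self 0⟩ hpb_bdd
  have hpb_le_a : ∀ M, pb M ≤ a := fun M => haLUB.1 (Set.mem_range_self M)
  have ha0 : (0:E) ≤ a := by rw [← hpb0]; exact hpb_le_a 0
  have ha_le_e : a ≤ e := haLUB.2 (fun x hx => by obtain ⟨M, rfl⟩ := hx; exact hpb_le M)
  have hSpb : ∀ M, S (pb (M+1)) = S p ⊔ pb M := by
    intro M; induction M with
    | zero => rw [hpbs 0, hpb0, hA0, hCEPS.S_hom, map_zero, sup_comm]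
    | succ M ih => rw [hpbs (M+1), hCEPS.S_hom, ih, hSA M, sup_assoc, ← hpbs M]
  have ha_Sa : a ≤ S a := by
    refine haLUB.2 (fun x hx => ?_)
    obtain ⟨M, rfl⟩ := hx
    have h1 : pb M ≤ S (pb (M+1)) := by rw [hSpb M]; exact le_sup_right
    exact h1.trans (hSmono (hpb_le_a (M+1)))
  have hSa : S a = a := by
    have h0 : T (S a - a) = 0 := by rw [map_sub, hCEPS.TS, sub_self]
    exact sub_eq_zero.1 (hCEPS.T_strictPos _ (sub_nonneg.2 ha_Sa) h0)
  have hTa : T a = a := by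
    have hmem : a ∈ {f : E | S f = f} := hSa
    rw [hErg] at hmem
    obtain ⟨y, hy⟩ := hmem
    rw [← hy, hCEPS.T_proj]
  have hTp_le_a : T p ≤ a := by
    have h1 : p ≤ pb 1 := by rw [hpbs 0, hpb0, hA0]; exact le_sup_right
    calc T p ≤ T a := hTmono (h1.trans (hpb_le_a 1))
      _ = a := hTa
  have hacomp : (e - a) ⊓ a = 0 := by
    have hdisjA : ∀ M, (e - a) ⊓ A M = 0 := by
      intro M
      refine le_antisymm ?_ (le_inf (sub_nonneg.2 ha_le_e) (hA_nonneg M))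
      have h1 : A M ≤ a := by
        refine le_trans ?_ (hpb_le_a (M+1))
        rw [hpbs M]; exact le_sup_right
      calc (e - a) ⊓ A M ≤ (e - A M) ⊓ A M := inf_le_inf_right _ (sub_le_sub_left h1 e)
        _ = 0 := hAcomp M
    have hdisjpb : ∀ M, (e - a) ⊓ pb M = 0 := by
      intro M; induction M with
      | zero => rw [hpb0]; exact inf_eq_right.2 (sub_nonneg.2 ha_le_e)
      | succ M ih =>
        rw [hpbs M]
        exact kac_disj_sup _ _ _ (sub_nonneg.2 ha_le_e) (hpb_nonneg M) (hA_nonneg M)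
          ih (hdisjA M)
    refine le_antisymm ?_ (le_inf (sub_nonneg.2 ha_le_e) ha0)
    have h2 : ∀ M, (e - a) ⊓ a ≤ a - pb M := by
      intro M
      have h3 := kac_inf_le_inf_add (e - a) (pb M) a (hpb_le_a M)
      rwa [hdisjpb M, zero_add] at h3
    have h3 : a ≤ a - (e - a) ⊓ a := by
      refine haLUB.2 (fun x hx => ?_)
      obtain ⟨M, rfl⟩ := hx
      exact le_sub_comm.1 (h2 M)
    exact (add_le_iff_nonpos_right a).1 (le_sub_iff_add_le.1 h3)
  have hma : ∀ m : ℕ, e ⊓ m • T p ≤ a := by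
    intro m
    calc e ⊓ m • T p ≤ e ⊓ m • a := inf_le_inf_left e (nsmul_le_nsmul_right hTp_le_a m)
      _ ≤ a := kac_comp_nsmul_le e a ha0 ha_le_e hacomp m
  have hbddP : BddAbove (Set.range fun m : ℕ => e ⊓ m • T p) :=
    ⟨e, by rintro x ⟨m, rfl⟩; exact inf_le_left⟩
  unfold bandProjApp
  constructor
  · -- upper bound
    rintro x ⟨N, rfl⟩
    show (∑ k ∈ Finset.Icc 1 (N+1), k • T (qComp R e p k)) ≤ ⨆ m : ℕ, e ⊓ m • T p
    have h1 : (∑ k ∈ Finset.Icc 1 (N+1), k • T (qComp R e p k)) ≤ e := by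
      rw [hF N]
      calc e - T (b (N+1)) - (N+1) • T (hh (N+1)) ≤ e - T (b (N+1)) :=
            sub_le_self _ (nsmul_nonneg (hTh_nonneg (N+1)) (N+1))
        _ ≤ e := sub_le_self _ (hTb_nonneg (N+1))
    have h2 : (∑ k ∈ Finset.Icc 1 (N+1), k • T (qComp R e p k))
        ≤ (∑ k ∈ Finset.Icc 1 (N+1), k) • T p := by
      rw [Finset.sum_smul]
      exact Finset.sum_le_sum (fun k _ => nsmul_le_nsmul_right (hTmono (hq_le_p k)) k)
    exact le_trans (le_inf h1 h2) (le_ciSup hbddP _)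
  · -- least upper bound
    intro u hu
    have ha_le_u : a ≤ u := by
      have hub : ∀ N : ℕ, e - u ≤ T (b (N+1)) + (N+1) • T (hh (N+1)) := by
        intro N
        have h1 : (∑ k ∈ Finset.Icc 1 (N+1), k • T (qComp R e p k)) ≤ u :=
          hu ⟨N, rfl⟩
        rw [hF N] at h1
        have h2 : e - (T (b (N+1)) + (N+1) • T (hh (N+1))) ≤ u := by
          rw [sub_add_eq_sub_sub]; exact h1
        exact sub_le_comm.1 h2
      set HH : ℕ → E := fun M => ∑ j ∈ Finset.Ioc 0 M, T (hh j) with hHHdef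
      have hHH0 : HH 0 = 0 := by simp [hHHdef]
      have hHHs : ∀ M, HH (M+1) = HH M + T (hh (M+1)) := fun M =>
        Finset.sum_Ioc_succ_top (Nat.zero_le M) _
      have hHH_mono : Monotone HH := monotone_nat_of_le_succ (fun M => by
        rw [hHHs M]; exact le_add_of_nonneg_right (hTh_nonneg (M+1)))
      have htel : ∀ M, HH M + T (b (M+1)) = T (b 1) := by
        intro M; induction M with
        | zero => rw [hHH0, zero_add]
        | succ M ih =>
          rw [hHHs M]
          have e2 : T (hh (M+1)) + T (b (M+2)) = T (b (M+1)) := by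
            have h3 := congrArg T (hstep1 (M+1))
            rwa [map_add] at h3
          rw [add_assoc, e2, ih]
      have hHH_le : ∀ M, HH M ≤ e := by
        intro M
        have h1 : HH M ≤ T (b 1) := by
          rw [← htel M]; exact le_add_of_nonneg_right (hTb_nonneg (M+1))
        exact h1.trans ((hTmono (hb_le 1)).trans_eq hCEPS.Te)
      have hHHbdd : BddAbove (Set.range HH) := ⟨e, by rintro x ⟨M, rfl⟩; exact hHH_le M⟩
      set Hs : E := sSup (Set.range HH) with hHsdef
      have hHsLUB : IsLUB (Set.range HH) Hs :=
        isLUB_csSup ⟨HH 0, Set.mem_range_self 0⟩ hHHbdd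
      have hHH_le_Hs : ∀ M, HH M ≤ Hs := fun M => hHsLUB.1 (Set.mem_range_self M)
      have htail : ∀ M : ℕ, M • T (hh (2*M)) ≤ HH (2*M) - HH M := by
        intro M
        have hsplit : HH M + ∑ j ∈ Finset.Ioc M (2*M), T (hh j) = HH (2*M) :=
          Finset.sum_Ioc_consecutive _ (Nat.zero_le M) (by omega)
        have hcard : (Finset.Ioc M (2*M)).card = M := by rw [Nat.card_Ioc]; omega
        have h1 : (Finset.Ioc M (2*M)).card • T (hh (2*M))
            ≤ ∑ j ∈ Finset.Ioc M (2*M), T (hh j) :=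
          Finset.card_nsmul_le_sum _ _ _ (fun j hj => hTh_anti (Finset.mem_Ioc.1 hj).2)
        rw [hcard] at h1
        exact h1.trans_eq (eq_sub_of_add_eq' hsplit)
      have key2 : ∀ M : ℕ, 1 ≤ M → e - u ≤ T (b M) + ((Hs - HH M) + (Hs - HH M)) := by
        intro M hM
        obtain ⟨N, hN⟩ : ∃ N, 2*M = N + 1 := ⟨2*M - 1, by omega⟩
        have h1 := hub N
        rw [← hN] at h1
        have h2 : T (b (2*M)) ≤ T (b M) := hTb_anti (by omega)
        have h3 : (2*M) • T (hh (2*M)) ≤ (Hs - HH M) + (Hs - HH M) := by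
          have h4 : (2*M) • T (hh (2*M)) = M • T (hh (2*M)) + M • T (hh (2*M)) := by
            rw [← add_nsmul]
            congr 1
            omega
          rw [h4]
          have h5 : M • T (hh (2*M)) ≤ Hs - HH M :=
            (htail M).trans (sub_le_sub_right (hHH_le_Hs (2*M)) _)
          exact add_le_add h5 h5
        exact h1.trans (add_le_add h2 h3)
      have key3 : ∀ M M' : ℕ, 1 ≤ M' →
          e - u ≤ T (b M) + ((Hs - HH M') + (Hs - HH M')) := by
        intro M M' hM'
        have hK1 : 1 ≤ max M M' := le_trans hM' (le_max_right M M')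
        have h1 := key2 (max M M') hK1
        have h2 : T (b (max M M')) ≤ T (b M) := hTb_anti (le_max_left M M')
        have h3 : Hs - HH (max M M') ≤ Hs - HH M' :=
          sub_le_sub_left (hHH_mono (le_max_right M M')) Hs
        exact h1.trans (add_le_add h2 (add_le_add h3 h3))
      have claim1 : ∀ x : E, (∀ M, x ≤ T (b M)) → x ≤ e - a := by
        intro x hx
        have hxT : ∀ M, T (pb M) ≤ e - x := by
          intro M
          have h1 : T (b M) = e - T (pb M) := by
            show T (e - pb M) = e - T (pb M)
            rw [map_sub, hCEPS.Te]
          have h2 := hx M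
          rw [h1] at h2
          exact le_sub_comm.1 h2
        set D : Set E := Set.range (fun M => a - pb M) with hDdef
        have hDne : D.Nonempty := ⟨a - pb 0, Set.mem_range_self 0⟩
        have hDdir : DirectedOn (· ≥ ·) D := by
          rintro x1 ⟨M1, rfl⟩ x2 ⟨M2, rfl⟩
          exact ⟨a - pb (max M1 M2), Set.mem_range_self _,
            sub_le_sub_left (hpb_mono (le_max_left M1 M2)) a,
            sub_le_sub_left (hpb_mono (le_max_right M1 M2)) a⟩
        have hDglb : IsGLB D 0 := by
          constructor
          · rintro x1 ⟨M, rfl⟩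
            exact sub_nonneg.2 (hpb_le_a M)
          · intro y hy
            have h1 : ∀ M, pb M ≤ a - y := fun M =>
              le_sub_comm.1 (hy (Set.mem_range_self M))
            have h2 : a ≤ a - y := haLUB.2 (fun z hz => by
              obtain ⟨M, rfl⟩ := hz; exact h1 M)
            exact (add_le_iff_nonpos_right a).1 (le_sub_iff_add_le.1 h2)
        have himg := hCEPS.T_ordCont D hDne hDdir hDglb
        have hlb : T a - (e - x) ∈ lowerBounds ((⇑T) '' D) := by
          rintro z ⟨w, ⟨M, rfl⟩, rfl⟩
          show T a - (e - x) ≤ T (a - pb M)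
          rw [map_sub]
          exact sub_le_sub_left (hxT M) (T a)
        have h4 : T a - (e - x) ≤ 0 := himg.2 hlb
        have h5 : T a ≤ e - x := sub_nonpos.1 h4
        rw [hTa] at h5
        exact le_sub_comm.1 h5
      have key4 : ∀ M' : ℕ, 1 ≤ M' → a - u ≤ (Hs - HH M') + (Hs - HH M') := by
        intro M' hM'
        have h1 : e - u - ((Hs - HH M') + (Hs - HH M')) ≤ e - a := by
          refine claim1 _ (fun M => ?_)
          exact sub_le_iff_le_add.2 (key3 M M' hM')
        rw [sub_sub] at h1
        have h2 : a ≤ u + ((Hs - HH M') + (Hs - HH M')) := (sub_le_sub_iff_left e).1 h1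
        exact sub_le_iff_le_add'.2 h2
      have hglbH : ∀ y : E, (∀ M, y ≤ Hs - HH M) → y ≤ 0 := by
        intro y hy
        have h1 : ∀ M, HH M ≤ Hs - y := fun M => le_sub_comm.1 (hy M)
        have h2 : Hs ≤ Hs - y := hHsLUB.2 (fun z hz => by
          obtain ⟨M, rfl⟩ := hz; exact h1 M)
        exact (add_le_iff_nonpos_right Hs).1 (le_sub_iff_add_le.1 h2)
      have key4' : ∀ M M' : ℕ, 1 ≤ M → 1 ≤ M' →
          a - u ≤ (Hs - HH M) + (Hs - HH M') := by
        intro M M' hM hM'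
        have hK1 : 1 ≤ max M M' := le_trans hM (le_max_left M M')
        have h1 := key4 (max M M') hK1
        have hmono : ∀ {i j : ℕ}, i ≤ j → Hs - HH j ≤ Hs - HH i := fun {i j} hij =>
          sub_le_sub_left (hHH_mono hij) Hs
        exact h1.trans (add_le_add (hmono (le_max_left M M')) (hmono (le_max_right M M')))
      have key5 : ∀ M' : ℕ, 1 ≤ M' → a - u - (Hs - HH M') ≤ 0 := by
        intro M' hM'
        refine hglbH _ (fun M => ?_)
        have h1 : a - u ≤ (Hs - HH (max M 1)) + (Hs - HH M') :=
          key4' (max M 1) M' (le_max_right M 1) hM'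
        have h2 : Hs - HH (max M 1) ≤ Hs - HH M :=
          sub_le_sub_left (hHH_mono (le_max_left M 1)) Hs
        have h3 : a - u ≤ (Hs - HH M) + (Hs - HH M') := h1.trans (add_le_add_left h2 _)
        exact sub_le_iff_le_add.2 h3
      have key6 : a - u ≤ 0 := by
        refine hglbH _ (fun M => ?_)
        have h1 := key5 (max M 1) (le_max_right M 1)
        have h2 : a - u ≤ Hs - HH (max M 1) := sub_nonpos.1 h1
        exact h2.trans (sub_le_sub_left (hHH_mono (le_max_left M 1)) Hs)
      exact sub_nonpos.1 key6
    exact ciSup_le (fun m => (hma m).trans ha_le_u)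
end
end
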